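/- arXiv:2604.10274 — 3 statements merged into one kernel-verified Lean document; each statement's English description precedes it below -/
import Mathlib

section
/- Fix ι ∈ {0,1}, let π ∈ Π_ι with opposite marginal P = r·ν_ῑ + P⊥ (Lebesgue decomposition with respect to ν_ῑ), and fix t ≥ 0. Then there exist finite measures σ_t and π_t^ov on Ω0 × Ω1 such that π = σ_t + π_t^ov, σ_t ∈ Feas_ῑ(t), σ_t(Eᶜ) = π_t^ov(Eᶜ) = 0, and π_t^ov(Ω0 × Ω1) = Over^π(t). Moreover, for any finite measures σ, π^ov with π = σ + π^ov, σ ∈ Feas_ῑ(t), and π^ov(Ω0 × Ω1) = Over^π(t), the Ω_ῑ-marginals are uniquely determined: the Ω_ῑ-marginal of σ equals min(r,t)·ν_ῑ and the Ω_ῑ-marginal of π^ov equals P⊥ + max(r − t, 0)·ν_ῑ. -/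
/- STATEMENT 2: Overflow decomposition with uniquely determined opposite marginals.
The side `ι ∈ {0,1}` is formalized abstractly: `X` plays the role of `Ω_ι` and `Y` of `Ω_ῑ`. -/

open MeasureTheory ProbabilityTheory Filter
open scoped ENNReal NNReal

noncomputable section

variable {X Y : Type} [MeasurableSpace X] [MeasurableSpace Y]

/-- Refinements of `νX` on side `X`. -/
def Plans (E : Set (X × Y)) (νX : Measure X) : Set (Measure (X × Y)) :=
  {π | IsFiniteMeasure π ∧ π Eᶜ = 0 ∧ π.map Prod.fst = νX}

/-- Capped feasible subplans at level `t`. -/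
def Feas (E : Set (X × Y)) (νX : Measure X) (νY : Measure Y) (t : ℝ) :
    Set (Measure (X × Y)) :=
  {σ | IsFiniteMeasure σ ∧ σ Eᶜ = 0 ∧ σ.map Prod.fst ≤ νX ∧
    σ.map Prod.snd ≤ (ENNReal.ofReal t) • νY}

/-- Overflow profile `Over^π(t) = P⊥(Y) + ∫ (r − t)₊ dνY`. -/
def Overflow (νY : Measure Y) (π : Measure (X × Y)) (t : ℝ) : ℝ≥0∞ :=
  ((π.map Prod.snd).singularPart νY) Set.univ
    + ∫⁻ y, ((π.map Prod.snd).rnDeriv νY y - ENNReal.ofReal t) ∂νY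

/-- Pushing forward a fiberwise density along `Prod.snd` gives a density on the marginal. -/
lemma map_snd_withDensity (π : Measure (X × Y)) {f : Y → ℝ≥0∞} (hf : Measurable f) :
    (π.withDensity fun p => f p.2).map Prod.snd = (π.map Prod.snd).withDensity f := by
  ext s hs
  rw [Measure.map_apply measurable_snd hs, withDensity_apply _ (measurable_snd hs),
    withDensity_apply _ hs, setLIntegral_map hs hf measurable_snd]

theorem overflow_decomposition
    [TopologicalSpace X] [PolishSpace X] [BorelSpace X]
    [TopologicalSpace Y] [PolishSpace Y] [BorelSpace Y]
    (E : Set (X × Y)) (hE : IsClosed E)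
    (νX : Measure X) (νY : Measure Y) [IsFiniteMeasure νX] [IsFiniteMeasure νY]
    (hνX : 0 < νX Set.univ) (hνY : 0 < νY Set.univ)
    (π : Measure (X × Y)) (hπ : π ∈ Plans E νX)
    (t : ℝ) (ht : 0 ≤ t) :
    (∃ σt πov : Measure (X × Y),
        π = σt + πov ∧ σt ∈ Feas E νX νY t ∧ σt Eᶜ = 0 ∧ πov Eᶜ = 0 ∧
        πov Set.univ = Overflow νY π t) ∧
      (∀ σ πov : Measure (X × Y),
        π = σ + πov → σ ∈ Feas E νX νY t → πov Set.univ = Overflow νY π t →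
        σ.map Prod.snd
            = νY.withDensity (fun y => min ((π.map Prod.snd).rnDeriv νY y) (ENNReal.ofReal t)) ∧
          πov.map Prod.snd
            = (π.map Prod.snd).singularPart νY
                + νY.withDensity (fun y => (π.map Prod.snd).rnDeriv νY y - ENNReal.ofReal t)) := by
  obtain ⟨hπfin, hπE, hπfst⟩ := hπ
  haveI := hπfin
  set P : Measure Y := π.map Prod.snd with hPdef
  have hrm : Measurable (P.rnDeriv νY) := Measure.measurable_rnDeriv P νY
  set r : Y → ℝ≥0∞ := P.rnDeriv νY with hrdef
  -- the set carrying the singular part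
  obtain ⟨s, hsm, hs1, hs2⟩ := Measure.mutuallySingular_singularPart P νY
  -- hs1 : P.singularPart νY s = 0, hs2 : νY sᶜ = 0
  -- the density of the feasible part
  set f : Y → ℝ≥0∞ := s.indicator (fun y => min (r y) (ENNReal.ofReal t) / r y)
    with hfdef
  have hfm : Measurable f :=
    Measurable.indicator ((hrm.min measurable_const).div hrm) hsm
  have hf1 : ∀ y, f y ≤ 1 := by
    intro y
    by_cases hy : y ∈ s
    · rw [hfdef, Set.indicator_of_mem hy]
      exact le_trans (ENNReal.div_le_div_right (min_le_left _ _) _) ENNReal.div_self_le_one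
    · rw [hfdef, Set.indicator_of_notMem hy]
      exact zero_le
  have hfm2 : Measurable (fun p : X × Y => f p.2) := hfm.comp measurable_snd
  set σt : Measure (X × Y) := π.withDensity fun p => f p.2 with hσtdef
  set πov : Measure (X × Y) := π.withDensity fun p => 1 - f p.2 with hπovdef
  have hsum : π = σt + πov := by
    rw [hσtdef, hπovdef, ← withDensity_add_left hfm2]
    have : ((fun p : X × Y => f p.2) + fun p : X × Y => 1 - f p.2) = fun _ => (1 : ℝ≥0∞) := by
      funext p
      exact add_tsub_cancel_of_le (hf1 p.2)
    rw [this]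
    exact (withDensity_one).symm
  have hσle : σt ≤ π := hsum ▸ Measure.le_add_right (le_refl σt)
  have hπovle : πov ≤ π := hsum ▸ Measure.le_add_left (le_refl πov)
  haveI hσfin : IsFiniteMeasure σt := isFiniteMeasure_of_le π hσle
  haveI hπovfin : IsFiniteMeasure πov := isFiniteMeasure_of_le π hπovle
  -- a.e. facts
  have hνYs : ∀ᵐ y ∂νY, y ∈ s := by
    rw [ae_iff]
    exact hs2
  have hrfin : ∀ᵐ y ∂νY, r y < ∞ := Measure.rnDeriv_lt_top P νY
  have hrf : ∀ᵐ y ∂νY, r y * f y = min (r y) (ENNReal.ofReal t) := by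
    filter_upwards [hνYs, hrfin] with y hy hfin
    rw [hfdef, Set.indicator_of_mem hy]
    by_cases h0 : r y = 0
    · rw [h0, zero_mul, min_eq_left (zero_le : (0:ℝ≥0∞) ≤ ENNReal.ofReal t)]
    · exact ENNReal.mul_div_cancel h0 hfin.ne
  -- marginal of σt
  have hσmar : σt.map Prod.snd
      = νY.withDensity (fun y => min (r y) (ENNReal.ofReal t)) := by
    rw [hσtdef, map_snd_withDensity π hfm, ← hPdef]
    conv_lhs => rw [P.haveLebesgueDecomposition_add νY]
    rw [withDensity_add_measure]
    have h1 : (P.singularPart νY).withDensity f = 0 := by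
      have hae : f =ᵐ[P.singularPart νY] 0 := by
        rw [Filter.EventuallyEq, ae_iff]
        refine measure_mono_null ?_ hs1
        intro y hy
        simp only [Set.mem_setOf_eq, hfdef, Pi.zero_apply] at hy
        by_contra hys
        exact hy (Set.indicator_of_notMem hys _)
      rw [withDensity_congr_ae hae, withDensity_zero]
    have h2 : (νY.withDensity (P.rnDeriv νY)).withDensity f
        = νY.withDensity (fun y => min (r y) (ENNReal.ofReal t)) := by
      rw [← withDensity_mul νY hrm hfm]
      exact withDensity_congr_ae hrf
    rw [h1, h2, zero_add]
  -- marginal of πov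
  have hπovmar : πov.map Prod.snd
      = P.singularPart νY + νY.withDensity (fun y => r y - ENNReal.ofReal t) := by
    rw [hπovdef, map_snd_withDensity π (f := fun y => 1 - f y) (measurable_const.sub hfm), ← hPdef]
    conv_lhs => rw [P.haveLebesgueDecomposition_add νY]
    rw [withDensity_add_measure]
    have h1 : (P.singularPart νY).withDensity (fun y => 1 - f y) = P.singularPart νY := by
      have hae : (fun y => 1 - f y) =ᵐ[P.singularPart νY] 1 := by
        rw [Filter.EventuallyEq, ae_iff]
        refine measure_mono_null ?_ hs1
        intro y hy
        simp only [Set.mem_setOf_eq, hfdef, Pi.one_apply] at hy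
        by_contra hys
        rw [Set.indicator_of_notMem hys, tsub_zero] at hy
        exact hy rfl
      rw [withDensity_congr_ae hae, withDensity_one]
    have h2 : (νY.withDensity (P.rnDeriv νY)).withDensity (fun y => 1 - f y)
        = νY.withDensity (fun y => r y - ENNReal.ofReal t) := by
      rw [← withDensity_mul νY (g := fun y => 1 - f y) hrm (measurable_const.sub hfm)]
      refine withDensity_congr_ae ?_
      filter_upwards [hrf, hrfin] with y h1 hfin
      simp only [Pi.mul_apply]
      have hmul : r y * (1 - f y) + r y * f y = r y := by
        rw [← mul_add, tsub_add_cancel_of_le (hf1 y), mul_one]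
      have hmin_ne : min (r y) (ENNReal.ofReal t) ≠ ∞ :=
        ne_top_of_le_ne_top hfin.ne (min_le_left _ _)
      have h3 : r y * (1 - f y) = r y - min (r y) (ENNReal.ofReal t) := by
        refine ENNReal.eq_sub_of_add_eq hmin_ne ?_
        rw [← h1]; exact hmul
      rw [h3]
      rcases le_total (r y) (ENNReal.ofReal t) with hc | hc
      · rw [min_eq_left hc, tsub_self, tsub_eq_zero_of_le hc]
      · rw [min_eq_right hc]
    rw [h1, h2]
  have hπovuniv : πov Set.univ = Overflow νY π t := by
    have : πov Set.univ = (πov.map Prod.snd) Set.univ := by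
      rw [Measure.map_apply measurable_snd MeasurableSet.univ, Set.preimage_univ]
    rw [this, hπovmar, Overflow, Measure.add_apply,
      withDensity_apply _ MeasurableSet.univ, setLIntegral_univ]
  constructor
  · -- existence
    refine ⟨σt, πov, hsum, ?_, ?_, ?_, hπovuniv⟩
    · refine ⟨hσfin, ?_, ?_, ?_⟩
      · exact le_antisymm (hπE ▸ hσle Eᶜ) zero_le
      · exact hπfst ▸ Measure.map_mono hσle measurable_fst
      · rw [hσmar, ← withDensity_const]
        exact withDensity_mono (Eventually.of_forall fun y => min_le_right _ _)
    · exact le_antisymm (hπE ▸ hσle Eᶜ) zero_le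
    · exact le_antisymm (hπE ▸ hπovle Eᶜ) zero_le
  · -- uniqueness of marginals
    intro σ πov' hsum' hσFeas hmass'
    obtain ⟨hσfin', hσE', hσfst', hσsnd'⟩ := hσFeas
    haveI := hσfin'
    haveI : IsFiniteMeasure πov' :=
      isFiniteMeasure_of_le π (hsum' ▸ Measure.le_add_left (le_refl πov'))
    set Q : Measure Y := σ.map Prod.snd with hQdef
    set R : Measure Y := πov'.map Prod.snd with hRdef
    haveI : IsFiniteMeasure Q := Measure.isFiniteMeasure_map σ Prod.snd
    haveI : IsFiniteMeasure R := Measure.isFiniteMeasure_map πov' Prod.snd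
    have hPQR : P = Q + R := by
      rw [hPdef, hsum', Measure.map_add _ _ measurable_snd]
    have hQac : Q ≪ νY := by
      exact (Measure.absolutelyContinuous_of_le hσsnd').trans Measure.smul_absolutelyContinuous
    set q : Y → ℝ≥0∞ := Q.rnDeriv νY with hqdef
    have hqm : Measurable q := Measure.measurable_rnDeriv Q νY
    -- q ≤ t a.e.
    have hqt : ∀ᵐ y ∂νY, q y ≤ ENNReal.ofReal t := by
      refine ae_le_of_forall_setLIntegral_le_of_sigmaFinite hqm fun u hu _ => ?_
      rw [Measure.setLIntegral_rnDeriv hQac u]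
      calc Q u ≤ (ENNReal.ofReal t • νY) u := hσsnd' u
        _ = ∫⁻ _ in u, ENNReal.ofReal t ∂νY := by
            rw [Measure.smul_apply, smul_eq_mul, setLIntegral_const]
    -- rnDeriv additivity
    have hadd : r =ᵐ[νY] q + R.rnDeriv νY := by
      rw [hrdef, hPQR]
      exact Measure.rnDeriv_add Q R νY
    have hqfin : ∀ᵐ y ∂νY, q y < ∞ := Measure.rnDeriv_lt_top Q νY
    have hqr : ∀ᵐ y ∂νY, q y ≤ r y := by
      filter_upwards [hadd] with y hy
      rw [hy]; exact le_add_right le_rfl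
    have hRrn : R.rnDeriv νY =ᵐ[νY] fun y => r y - q y := by
      filter_upwards [hadd, hqfin] with y hy hfin
      refine ENNReal.eq_sub_of_add_eq hfin.ne ?_
      rw [add_comm]; exact hy.symm
    -- singular parts
    have hsing : R.singularPart νY = P.singularPart νY := by
      rw [hPQR, Measure.singularPart_add, Measure.singularPart_eq_zero_of_ac hQac, zero_add]
    -- mass identity
    have hRuniv : R Set.univ
        = (P.singularPart νY) Set.univ + ∫⁻ y, (r y - q y) ∂νY := by
      conv_lhs => rw [R.haveLebesgueDecomposition_add νY]
      rw [Measure.add_apply, hsing, withDensity_apply _ MeasurableSet.univ, setLIntegral_univ]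
      congr 1
      exact lintegral_congr_ae hRrn
    have hπovuniv' : πov' Set.univ = R Set.univ := by
      rw [hRdef, Measure.map_apply measurable_snd MeasurableSet.univ, Set.preimage_univ]
    have hsingfin : (P.singularPart νY) Set.univ ≠ ∞ := by
      refine ne_top_of_le_ne_top (measure_ne_top P Set.univ) ?_
      exact Measure.singularPart_le P νY Set.univ
    have hlint : ∫⁻ y, (r y - ENNReal.ofReal t) ∂νY = ∫⁻ y, (r y - q y) ∂νY := by
      have h1 : (P.singularPart νY) Set.univ + ∫⁻ y, (r y - ENNReal.ofReal t) ∂νY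
          = (P.singularPart νY) Set.univ + ∫⁻ y, (r y - q y) ∂νY := by
        rw [← hRuniv, ← hπovuniv', hmass', Overflow]
      exact (ENNReal.add_right_inj hsingfin).mp h1
    have hrint : ∫⁻ y, (r y - ENNReal.ofReal t) ∂νY ≠ ∞ := by
      refine ne_top_of_le_ne_top (Measure.lintegral_rnDeriv_lt_top P νY).ne ?_
      exact lintegral_mono fun y => tsub_le_self
    -- a.e. equality of the differences
    have hdiff : (fun y => r y - ENNReal.ofReal t) =ᵐ[νY] fun y => r y - q y := by
      refine ae_eq_of_ae_le_of_lintegral_le ?_ hrint ((hrm.sub hqm).aemeasurable) hlint.ge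
      filter_upwards [hqt] with y hy
      exact tsub_le_tsub_left hy _
    -- conclude q = min r t a.e.
    have hqmin : q =ᵐ[νY] fun y => min (r y) (ENNReal.ofReal t) := by
      filter_upwards [hdiff, hqt, hqr, hrfin] with y h1 h2 h3 h4
      rcases le_total (r y) (ENNReal.ofReal t) with hc | hc
      · rw [min_eq_left hc]
        have h0 : r y - q y = 0 := by rw [← h1]; exact tsub_eq_zero_of_le hc
        exact le_antisymm h3 (tsub_eq_zero_iff_le.mp h0)
      · rw [min_eq_right hc]
        exact (ENNReal.sub_right_inj h4.ne h3 hc).mp h1.symm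
    constructor
    · rw [← Measure.withDensity_rnDeriv_eq Q νY hQac]
      exact withDensity_congr_ae hqmin
    · show R = _
      conv_lhs => rw [R.haveLebesgueDecomposition_add νY]
      rw [hsing]
      congr 1
      refine withDensity_congr_ae ?_
      filter_upwards [hRrn, hdiff] with y h1 h2
      rw [h1, ← h2]
end
end

section
/- Fix ι ∈ {0,1} and let φ : [0,∞) → ℝ be convex and lower semicontinuous with finite recession slope φ'_∞ := lim_{t→∞} φ(t)/t ∈ ℝ. Let φ'_+ denote the right derivative of φ and let μ_φ be the finite Borel measure on (0,∞) determined by μ_φ((a,b]) = φ'_+(b) − φ'_+(a) for 0 < a < b < ∞. Then for every π ∈ Π_ι, D_φ(ν_ῑ^{(π)}‖ν_ῑ) = φ(0)·ν_ῑ(Ω_ῑ) + φ'_+(0)·ν_ι(Ω_ι) + ∫_{(0,∞)} Over^π(t) dμ_φ(t); in particular the first two terms do not depend on π. -/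
/- STATEMENT 3: Hinge representation of a finite-slope convex divergence
(Lemma `convex_hinge_representation_for_divergence`).  The side `ι ∈ {0,1}` is formalized
abstractly: `X` plays the role of `Ω_ι` and `Y` of `Ω_ῑ`. -/

open MeasureTheory ProbabilityTheory Filter
open scoped ENNReal NNReal

noncomputable section

/-- The nonnegative part of an extended real number, as an element of `ℝ≥0∞`. -/
def erealToENNReal (a : EReal) : ℝ≥0∞ :=
  if a = ⊤ then ⊤ else ENNReal.ofReal a.toReal

/-- Extended-real integral via positive/negative parts. -/
def erealIntegral {Ω : Type} [MeasurableSpace Ω] (μ : Measure Ω) (f : Ω → EReal) : EReal :=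
  ((∫⁻ x, erealToENNReal (f x) ∂μ : ℝ≥0∞) : EReal)
    - ((∫⁻ x, erealToENNReal (-f x) ∂μ : ℝ≥0∞) : EReal)

/-- Recession slope of `θ`, i.e. `lim_{t → ∞} θ t / t`. -/
def recessionSlope (θ : ℝ → EReal) : EReal :=
  Filter.limsup (fun t : ℝ => θ t * ((t⁻¹ : ℝ) : EReal)) Filter.atTop

/-- The `θ`-divergence `D_θ(P‖Q) = ∫ θ(dP_ac/dQ) dQ + θ'_∞ · P⊥(Ω)`. -/
def thetaDiv {Ω : Type} [MeasurableSpace Ω] (θ : ℝ → EReal) (P Q : Measure Ω) : EReal :=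
  erealIntegral Q (fun x => θ ((P.rnDeriv Q x).toReal))
    + recessionSlope θ * ((P.singularPart Q Set.univ : ℝ≥0∞) : EReal)

/-- Right derivative of a real function. -/
def rightDeriv (φ : ℝ → ℝ) (x : ℝ) : ℝ := derivWithin φ (Set.Ioi x) x


section AuxAll
open Set

/-- hinge integral -/
def hinge (μφ : Measure ℝ) (u : ℝ) : ℝ≥0∞ :=
  ∫⁻ t in Set.Ioi (0:ℝ), (ENNReal.ofReal u - ENNReal.ofReal t) ∂μφ

lemma hinge_mono (μφ : Measure ℝ) : Monotone (hinge μφ) := fun u v huv =>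
  lintegral_mono fun t => tsub_le_tsub_right (ENNReal.ofReal_le_ofReal huv) _

lemma hinge_le (μφ : Measure ℝ) (u : ℝ) :
    hinge μφ u ≤ ENNReal.ofReal u * μφ (Set.Ioi 0) := by
  calc hinge μφ u ≤ ∫⁻ _ in Set.Ioi (0:ℝ), ENNReal.ofReal u ∂μφ :=
        lintegral_mono fun t => tsub_le_self
    _ = ENNReal.ofReal u * μφ (Set.Ioi 0) := by
        rw [lintegral_const, Measure.restrict_apply_univ]

lemma hinge_zero (μφ : Measure ℝ) : hinge μφ 0 = 0 := by
  unfold hinge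
  simp [zero_tsub]

lemma hinge_lt_top (μφ : Measure ℝ) [IsFiniteMeasure μφ] (u : ℝ) : hinge μφ u < ⊤ :=
  lt_of_le_of_lt (hinge_le μφ u) (ENNReal.mul_lt_top ENNReal.ofReal_lt_top (measure_lt_top _ _))

lemma hinge_le_Ioc (μφ : Measure ℝ) (u : ℝ) (hu : 0 < u) :
    hinge μφ u ≤ ENNReal.ofReal u * μφ (Set.Ioc 0 u) := by
  have h1 : hinge μφ u = ∫⁻ t in Set.Ioc 0 u ∪ Set.Ioi u, (ENNReal.ofReal u - ENNReal.ofReal t) ∂μφ := by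
    rw [Set.Ioc_union_Ioi_eq_Ioi hu.le]; rfl
  rw [h1, lintegral_union measurableSet_Ioi Set.Ioc_disjoint_Ioi_same]
  have h2 : ∫⁻ t in Set.Ioi u, (ENNReal.ofReal u - ENNReal.ofReal t) ∂μφ = 0 := by
    rw [setLIntegral_eq_zero_iff measurableSet_Ioi]
    · filter_upwards with t
      intro ht
      exact tsub_eq_zero_of_le (ENNReal.ofReal_le_ofReal (le_of_lt ht))
    · exact (measurable_const.sub (ENNReal.measurable_ofReal))
  rw [h2, add_zero]
  calc ∫⁻ t in Set.Ioc 0 u, (ENNReal.ofReal u - ENNReal.ofReal t) ∂μφ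
      ≤ ∫⁻ _ in Set.Ioc 0 u, ENNReal.ofReal u ∂μφ := lintegral_mono fun t => tsub_le_self
    _ = ENNReal.ofReal u * μφ (Set.Ioc 0 u) := by rw [lintegral_const, Measure.restrict_apply_univ]

section Convex

variable {φ : ℝ → ℝ} (hconv : ConvexOn ℝ (Set.Ici 0) φ)

include hconv in
lemma conv_hasRD {x : ℝ} (hx : 0 < x) :
    HasDerivWithinAt φ (rightDeriv φ x) (Set.Ioi x) x := by
  have hxS : x ∈ Set.Ici (0:ℝ) := hx.le
  have hsub : Set.Ioi x ⊆ Set.Ici (0:ℝ) \ {x} := fun y hy =>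
    ⟨le_of_lt (hx.trans hy), ne_of_gt hy⟩
  have Mf : MonotoneOn (slope φ x) (Set.Ioi x) := (hconv.slope_mono hxS).mono hsub
  have hbdd : BddBelow (slope φ x '' Set.Ioi x) := by
    refine ⟨slope φ x (x/2), ?_⟩
    rintro b ⟨y, hy, rfl⟩
    have h2 : (x/2 : ℝ) ∈ Set.Ici (0:ℝ) \ {x} :=
      ⟨by simp only [Set.mem_Ici]; linarith, by simp only [Set.mem_singleton_iff]; intro h; linarith⟩
    have hxy : x < y := hy
    exact (hconv.slope_mono hxS) h2 (hsub hy) (by linarith)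
  have T := MonotoneOn.tendsto_nhdsGT Mf hbdd
  have hEq : Set.Ioi x \ {x} = Set.Ioi x := Set.diff_singleton_eq_self (by simp)
  have H : HasDerivWithinAt φ (sInf (slope φ x '' Set.Ioi x)) (Set.Ioi x) x := by
    rw [hasDerivWithinAt_iff_tendsto_slope, hEq]
    exact T
  exact H.differentiableWithinAt.hasDerivWithinAt

include hconv in
lemma tendsto_slope_rd {x : ℝ} (hx : 0 < x) :
    Tendsto (slope φ x) (nhdsWithin x (Set.Ioi x)) (nhds (rightDeriv φ x)) := by
  have := (conv_hasRD hconv hx)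
  rw [hasDerivWithinAt_iff_tendsto_slope, Set.diff_singleton_eq_self (by simp)] at this
  exact this

include hconv in
lemma rd_mono' {a b : ℝ} (ha : 0 < a) (hab : a < b) : rightDeriv φ a ≤ rightDeriv φ b := by
  have hb : 0 < b := ha.trans hab
  have h1 : rightDeriv φ a ≤ slope φ a b :=
    hconv.le_slope_of_hasDerivWithinAt_Ioi ha.le hb.le hab (conv_hasRD hconv ha)
  have h2 : slope φ a b ≤ rightDeriv φ b := by
    rw [slope_comm]
    refine ge_of_tendsto (tendsto_slope_rd hconv hb) ?_
    filter_upwards [eventually_mem_nhdsWithin] with y hy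
    exact (hconv.slope_mono hb.le) ⟨ha.le, ne_of_lt hab⟩
      ⟨(hb.trans hy).le, (ne_of_gt hy)⟩ (hab.le.trans (le_of_lt hy))
  exact h1.trans h2

end Convex

section Measurey

variable {φ : ℝ → ℝ} {μφ : Measure ℝ} [IsFiniteMeasure μφ]

/-- The candidate right derivative at 0. -/
def rdZero (φ : ℝ → ℝ) : ℝ := sInf (rightDeriv φ '' Set.Ioi 0)

variable (hconv : ConvexOn ℝ (Set.Ici 0) φ)
variable (hμφ : ∀ a b : ℝ, 0 < a → a < b →
    μφ (Set.Ioc a b) = ENNReal.ofReal (rightDeriv φ b - rightDeriv φ a))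

include hconv hμφ in
lemma rd_bddBelow : BddBelow (rightDeriv φ '' Set.Ioi 0) := by
  refine ⟨rightDeriv φ 1 - (μφ Set.univ).toReal, ?_⟩
  rintro b ⟨a, ha, rfl⟩
  have ha' : (0:ℝ) < a := ha
  rcases lt_trichotomy a 1 with h | h | h
  · have := hμφ a 1 ha' h
    have hle : μφ (Set.Ioc a 1) ≤ μφ Set.univ := measure_mono (Set.subset_univ _)
    rw [this] at hle
    have := (ENNReal.ofReal_le_iff_le_toReal (measure_ne_top μφ _)).mp hle
    linarith
  · subst h
    have : (0:ℝ) ≤ (μφ Set.univ).toReal := ENNReal.toReal_nonneg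
    linarith
  · have h1 := rd_mono' hconv one_pos h
    have : (0:ℝ) ≤ (μφ Set.univ).toReal := ENNReal.toReal_nonneg
    linarith

include hconv hμφ in
lemma tendsto_rd0 : Tendsto (rightDeriv φ) (nhdsWithin 0 (Set.Ioi 0)) (nhds (rdZero φ)) := by
  refine MonotoneOn.tendsto_nhdsGT ?_ (rd_bddBelow hconv hμφ)
  intro a ha b hb hab
  rcases eq_or_lt_of_le hab with rfl | h
  · exact le_refl _
  · exact rd_mono' hconv ha h

include hconv hμφ in
lemma rdZero_le {x : ℝ} (hx : 0 < x) : rdZero φ ≤ rightDeriv φ x :=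
  csInf_le (rd_bddBelow hconv hμφ) ⟨x, hx, rfl⟩

include hconv hμφ in
lemma measIoc {x : ℝ} (hx : 0 < x) :
    μφ (Set.Ioc 0 x) = ENNReal.ofReal (rightDeriv φ x - rdZero φ) := by
  set s : ℕ → Set ℝ := fun n => Set.Ioc (x / (n + 2)) x with hs_def
  have hpos : ∀ n : ℕ, 0 < x / ((n:ℝ) + 2) := fun n => by positivity
  have hlt : ∀ n : ℕ, x / ((n:ℝ) + 2) < x := fun n =>
    div_lt_self hx (by have : (0:ℝ) ≤ (n:ℝ) := Nat.cast_nonneg n; linarith)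
  have hmono : Monotone s := by
    intro n m hnm
    apply Set.Ioc_subset_Ioc_left
    have hc : ((n:ℝ)+2) ≤ (m:ℝ)+2 := by
      have : (n:ℝ) ≤ (m:ℝ) := Nat.cast_le.mpr hnm
      linarith
    exact div_le_div_of_nonneg_left hx.le (by positivity) hc
  have hU : (⋃ n, s n) = Set.Ioc 0 x := by
    ext t
    simp only [Set.mem_iUnion, hs_def, Set.mem_Ioc]
    constructor
    · rintro ⟨n, h1, h2⟩
      exact ⟨(hpos n).trans h1, h2⟩
    · rintro ⟨ht0, htx⟩
      obtain ⟨n, hn⟩ := exists_nat_gt (x / t)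
      refine ⟨n, ?_, htx⟩
      rw [div_lt_iff₀ (by positivity)]
      rw [div_lt_iff₀ ht0] at hn
      nlinarith
  have T1 : Tendsto (μφ ∘ s) atTop (nhds (μφ (Set.Ioc 0 x))) := by
    have := tendsto_measure_iUnion_atTop (μ := μφ) hmono
    rwa [hU] at this
  have hEq : ∀ n : ℕ, (μφ ∘ s) n
      = ENNReal.ofReal (rightDeriv φ x - rightDeriv φ (x / ((n:ℝ) + 2))) := fun n =>
    hμφ _ _ (hpos n) (hlt n)
  have T2 : Tendsto (fun n : ℕ => rightDeriv φ (x / ((n:ℝ) + 2))) atTop (nhds (rdZero φ)) := by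
    apply (tendsto_rd0 hconv hμφ).comp
    rw [tendsto_nhdsWithin_iff]
    constructor
    · have h2 : Tendsto (fun n : ℕ => (n:ℝ) + 2) atTop atTop :=
        tendsto_atTop_add_const_right atTop 2 tendsto_natCast_atTop_atTop
      simpa using (tendsto_const_nhds (x := x)).div_atTop h2
    · exact Filter.Eventually.of_forall fun n => hpos n
  have T3 : Tendsto (μφ ∘ s) atTop (nhds (ENNReal.ofReal (rightDeriv φ x - rdZero φ))) := by
    exact Tendsto.congr (fun n => (hEq n).symm)
      (ENNReal.tendsto_ofReal ((tendsto_const_nhds.sub T2)))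
  exact tendsto_nhds_unique T1 T3

end Measurey

section Cont

variable {φ : ℝ → ℝ} (hconv : ConvexOn ℝ (Set.Ici 0) φ)
    (hlsc : LowerSemicontinuousOn φ (Set.Ici 0))

include hconv hlsc in
lemma cont_zero : ContinuousWithinAt φ (Set.Ici 0) 0 := by
  rw [ContinuousWithinAt]
  refine tendsto_order.2 ⟨fun l hl => hlsc 0 Set.self_mem_Ici l hl, fun m hm => ?_⟩
  have h1 : ∀ᶠ t in nhdsWithin (0:ℝ) (Set.Ici 0), t < 1 :=
    eventually_nhdsWithin_of_eventually_nhds (eventually_lt_nhds one_pos)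
  have h2 : ∀ᶠ t in nhdsWithin (0:ℝ) (Set.Ici 0), φ 0 + t * (φ 1 - φ 0) < m := by
    apply eventually_nhdsWithin_of_eventually_nhds
    have hcont : ContinuousAt (fun t : ℝ => φ 0 + t * (φ 1 - φ 0)) 0 := by fun_prop
    have : φ 0 + (0:ℝ) * (φ 1 - φ 0) < m := by simpa using hm
    exact hcont.eventually_lt_const this
  filter_upwards [h1, h2, eventually_mem_nhdsWithin] with t ht1 ht2 ht0
  have ht0' : (0:ℝ) ≤ t := ht0
  have hcvx := hconv.2 (Set.self_mem_Ici) (by norm_num : (1:ℝ) ∈ Set.Ici (0:ℝ))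
    (by linarith : (0:ℝ) ≤ 1 - t) ht0' (by ring)
  simp only [smul_eq_mul, mul_zero, mul_one, zero_add] at hcvx
  calc φ t ≤ (1 - t) * φ 0 + t * φ 1 := hcvx
    _ = φ 0 + t * (φ 1 - φ 0) := by ring
    _ < m := ht2

include hconv hlsc in
lemma cont_Icc (u : ℝ) : ContinuousOn φ (Set.Icc 0 u) := by
  intro x hx
  rcases eq_or_lt_of_le hx.1 with rfl | hx0
  · exact (cont_zero hconv hlsc).mono (fun y hy => hy.1)
  · have hcont := hconv.continuousOn_interior
    rw [interior_Ici] at hcont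
    exact ((hcont.continuousAt (isOpen_Ioi.mem_nhds hx0)).continuousWithinAt)

end Cont

section Fub

variable {μφ : Measure ℝ} [IsFiniteMeasure μφ]

lemma meas_measIoc : Measurable (fun x : ℝ => μφ (Set.Ioc 0 x)) :=
  Monotone.measurable (fun a b hab => measure_mono (Set.Ioc_subset_Ioc_right hab))

lemma integral_measIoc (u : ℝ) (hu : 0 < u) :
    ∫ x in (0:ℝ)..u, (μφ (Set.Ioc 0 x)).toReal = (hinge μφ u).toReal := by
  rw [intervalIntegral.integral_of_le hu.le]
  rw [integral_toReal (meas_measIoc.aemeasurable)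
    (Filter.Eventually.of_forall fun x => measure_lt_top _ _)]
  congr 1
  have key : ∀ x : ℝ, μφ (Set.Ioc 0 x) = ∫⁻ t, (Set.Ioc 0 x).indicator 1 t ∂μφ :=
    fun x => (lintegral_indicator_one measurableSet_Ioc).symm
  have hck : ∫⁻ x in Set.Ioc 0 u, μφ (Set.Ioc 0 x) ∂volume
      = ∫⁻ x in Set.Ioc 0 u, ∫⁻ t, (Set.Ioc 0 x).indicator 1 t ∂μφ ∂volume :=
    lintegral_congr fun x => key x
  rw [hck]
  have hmeasE : Measurable (Function.uncurry fun x t : ℝ => (Set.Ioc 0 x).indicator (1 : ℝ → ℝ≥0∞) t) := by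
    have hE : MeasurableSet {p : ℝ × ℝ | 0 < p.2 ∧ p.2 ≤ p.1} :=
      ((measurableSet_lt measurable_const measurable_snd).inter
        (measurableSet_le measurable_snd measurable_fst))
    have : (Function.uncurry fun x t : ℝ => (Set.Ioc 0 x).indicator (1 : ℝ → ℝ≥0∞) t)
        = {p : ℝ × ℝ | 0 < p.2 ∧ p.2 ≤ p.1}.indicator (1 : ℝ × ℝ → ℝ≥0∞) := by
      funext p
      simp only [Function.uncurry, Set.indicator_apply, Set.mem_Ioc, Set.mem_setOf_eq,
        Pi.one_apply]
    rw [this]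
    exact measurable_const.indicator hE
  rw [lintegral_lintegral_swap hmeasE.aemeasurable]
  have hg0 : ∀ t : ℝ, t ∉ Set.Ioi (0:ℝ) →
      (∫⁻ x in Set.Ioc 0 u, (Set.Ioc 0 x).indicator 1 t ∂volume) = 0 := by
    intro t ht
    have : ∀ x : ℝ, (Set.Ioc 0 x).indicator (1 : ℝ → ℝ≥0∞) t = 0 := by
      intro x
      apply Set.indicator_of_notMem
      intro hc
      exact ht hc.1
    simp only [this, lintegral_zero]
  have hsplit : (fun t : ℝ => ∫⁻ x in Set.Ioc 0 u, (Set.Ioc 0 x).indicator 1 t ∂volume)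
      = (Set.Ioi (0:ℝ)).indicator (fun t => ∫⁻ x in Set.Ioc 0 u, (Set.Ioc 0 x).indicator 1 t ∂volume) := by
    funext t
    by_cases ht : t ∈ Set.Ioi (0:ℝ)
    · rw [Set.indicator_of_mem ht]
    · rw [Set.indicator_of_notMem ht, hg0 t ht]
  rw [hsplit, lintegral_indicator measurableSet_Ioi]
  unfold hinge
  apply setLIntegral_congr_fun_ae measurableSet_Ioi
  filter_upwards with t ht
  have hind : ∀ x : ℝ, (Set.Ioc 0 x).indicator (1 : ℝ → ℝ≥0∞) t = (Set.Ici t).indicator 1 x := by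
    intro x
    simp only [Set.indicator_apply, Set.mem_Ioc, Set.mem_Ici, Pi.one_apply]
    have ht' : (0:ℝ) < t := ht
    by_cases h : t ≤ x
    · rw [if_pos ⟨ht', h⟩, if_pos h]
    · rw [if_neg (fun hc => h hc.2), if_neg h]
  simp only [hind]
  rw [lintegral_indicator_one measurableSet_Ici, Measure.restrict_apply measurableSet_Ici]
  have hset : Set.Ici t ∩ Set.Ioc 0 u = Set.Icc t u := by
    ext z
    simp only [Set.mem_inter_iff, Set.mem_Ici, Set.mem_Ioc, Set.mem_Icc]
    have ht' : (0:ℝ) < t := ht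
    constructor
    · rintro ⟨h1, _, h3⟩; exact ⟨h1, h3⟩
    · rintro ⟨h1, h2⟩; exact ⟨h1, by linarith, h2⟩
  rw [hset, Real.volume_Icc, ENNReal.ofReal_sub u (le_of_lt ht)]

end Fub

section Key

variable {φ : ℝ → ℝ} {μφ : Measure ℝ} [IsFiniteMeasure μφ]
variable (hconv : ConvexOn ℝ (Set.Ici 0) φ)
    (hlsc : LowerSemicontinuousOn φ (Set.Ici 0))
    (hμφ : ∀ a b : ℝ, 0 < a → a < b →
      μφ (Set.Ioc a b) = ENNReal.ofReal (rightDeriv φ b - rightDeriv φ a))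

include hconv hlsc hμφ in
lemma key_identity {u : ℝ} (hu : 0 ≤ u) :
    φ u = φ 0 + rdZero φ * u + (hinge μφ u).toReal := by
  rcases eq_or_lt_of_le hu with rfl | hu0
  · simp [hinge_zero]
  set g : ℝ → ℝ := fun x => rdZero φ + (μφ (Set.Ioc 0 x)).toReal with hg_def
  have hg_mono : Monotone g := by
    intro a b hab
    have : (μφ (Set.Ioc 0 a)).toReal ≤ (μφ (Set.Ioc 0 b)).toReal :=
      ENNReal.toReal_mono (measure_ne_top _ _) (measure_mono (Set.Ioc_subset_Ioc_right hab))
    simp only [hg_def]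
    linarith
  have hgx : ∀ x : ℝ, 0 < x → g x = rightDeriv φ x := by
    intro x hx
    have h1 := measIoc hconv hμφ hx
    have h2 : (0:ℝ) ≤ rightDeriv φ x - rdZero φ :=
      sub_nonneg.mpr (rdZero_le hconv hμφ hx)
    simp only [hg_def, h1, ENNReal.toReal_ofReal h2]
    ring
  have hderiv : ∀ x ∈ Set.Ioo 0 u, HasDerivWithinAt φ (g x) (Set.Ioi x) x := by
    intro x hx
    rw [hgx x hx.1]
    exact conv_hasRD hconv hx.1
  have hint : IntervalIntegrable g volume 0 u := hg_mono.intervalIntegrable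
  have hFTC := intervalIntegral.integral_eq_sub_of_hasDeriv_right_of_le hu
    (cont_Icc hconv hlsc u) hderiv hint
  have hsplit : ∫ y in (0:ℝ)..u, g y
      = rdZero φ * u + ∫ x in (0:ℝ)..u, (μφ (Set.Ioc 0 x)).toReal := by
    have hint2 : IntervalIntegrable (fun x : ℝ => (μφ (Set.Ioc 0 x)).toReal) volume 0 u := by
      apply Monotone.intervalIntegrable
      intro a b hab
      exact ENNReal.toReal_mono (measure_ne_top _ _) (measure_mono (Set.Ioc_subset_Ioc_right hab))
    rw [hg_def]
    rw [intervalIntegral.integral_add intervalIntegrable_const hint2]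
    rw [intervalIntegral.integral_const]
    simp [smul_eq_mul, mul_comm]
  rw [hsplit, integral_measIoc u hu0] at hFTC
  linarith

include hconv hlsc hμφ in
lemma hasDerivAt_zero' :
    HasDerivWithinAt φ (rdZero φ) (Set.Ioi 0) 0 := by
  rw [hasDerivWithinAt_iff_tendsto_slope, Set.diff_singleton_eq_self (by simp)]
  have hμ0 : Tendsto (fun v : ℝ => (μφ (Set.Ioc 0 v)).toReal) (nhdsWithin 0 (Set.Ioi 0)) (nhds 0) := by
    have hmono : MonotoneOn (fun v : ℝ => (μφ (Set.Ioc 0 v)).toReal) (Set.Ioi 0) := by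
      intro a _ b _ hab
      exact ENNReal.toReal_mono (measure_ne_top _ _) (measure_mono (Set.Ioc_subset_Ioc_right hab))
    have hbdd : BddBelow ((fun v : ℝ => (μφ (Set.Ioc 0 v)).toReal) '' Set.Ioi 0) :=
      ⟨0, by rintro b ⟨a, _, rfl⟩; exact ENNReal.toReal_nonneg⟩
    have hT := MonotoneOn.tendsto_nhdsGT hmono hbdd
    have hInf : sInf ((fun v : ℝ => (μφ (Set.Ioc 0 v)).toReal) '' Set.Ioi 0) = 0 := by
      apply le_antisymm
      · -- use sets Ioc 0 (1/(n+1)) decreasing to empty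
        have hseq : Tendsto (fun n : ℕ => (μφ (Set.Ioc 0 (1/((n:ℝ)+1)))).toReal) atTop (nhds 0) := by
          have hanti : Antitone (fun n : ℕ => Set.Ioc (0:ℝ) (1/((n:ℝ)+1))) := by
            intro n m hnm
            apply Set.Ioc_subset_Ioc_right
            apply div_le_div_of_nonneg_left zero_le_one (by positivity)
            have : (n:ℝ) ≤ (m:ℝ) := Nat.cast_le.mpr hnm
            linarith
          have hiInter : (⋂ n : ℕ, Set.Ioc (0:ℝ) (1/((n:ℝ)+1))) = ∅ := by
            ext t
            simp only [Set.mem_iInter, Set.mem_Ioc, Set.mem_empty_iff_false, iff_false, not_forall]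
            by_cases ht0 : 0 < t
            · obtain ⟨n, hn⟩ := exists_nat_gt (1 / t)
              refine ⟨n, ?_⟩
              rintro ⟨-, h3⟩
              rw [le_div_iff₀ (by positivity)] at h3
              rw [div_lt_iff₀ ht0] at hn
              nlinarith
            · exact ⟨0, fun h => ht0 h.1⟩
          have hm := tendsto_measure_iInter_atTop (μ := μφ)
            (fun n => (measurableSet_Ioc).nullMeasurableSet) hanti
            ⟨0, measure_ne_top _ _⟩
          rw [hiInter] at hm
          simp only [measure_empty] at hm
          have := (ENNReal.tendsto_toReal (by simp : (0:ℝ≥0∞) ≠ ⊤)).comp hm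
          simpa [Function.comp_def] using this
        have hle : ∀ n : ℕ, sInf ((fun v : ℝ => (μφ (Set.Ioc 0 v)).toReal) '' Set.Ioi 0)
            ≤ (μφ (Set.Ioc 0 (1/((n:ℝ)+1)))).toReal := fun n =>
          csInf_le hbdd ⟨1/((n:ℝ)+1), by simp only [Set.mem_Ioi]; positivity, rfl⟩
        exact ge_of_tendsto hseq (Filter.Eventually.of_forall hle)
      · refine le_csInf ⟨(μφ (Set.Ioc 0 1)).toReal, ⟨1, Set.mem_Ioi.mpr one_pos, rfl⟩⟩ ?_
        rintro b ⟨a, _, rfl⟩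
        exact ENNReal.toReal_nonneg
    rwa [hInf] at hT
  have hsq : Tendsto (fun v : ℝ => slope φ 0 v) (nhdsWithin 0 (Set.Ioi 0)) (nhds (rdZero φ)) := by
    have hub : ∀ v ∈ Set.Ioi (0:ℝ), slope φ 0 v ≤ rdZero φ + (μφ (Set.Ioc 0 v)).toReal := by
      intro v hv
      have hv' : (0:ℝ) < v := hv
      rw [slope_def_field, key_identity hconv hlsc hμφ hv'.le, sub_zero]
      have h1 : (hinge μφ v).toReal ≤ v * (μφ (Set.Ioc 0 v)).toReal := by
        have := hinge_le_Ioc μφ v hv'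
        have h2 := ENNReal.toReal_mono
          (by exact ENNReal.mul_ne_top ENNReal.ofReal_ne_top (measure_ne_top _ _)) this
        rwa [ENNReal.toReal_mul, ENNReal.toReal_ofReal hv'.le] at h2
      rw [div_le_iff₀ hv']
      have : (0:ℝ) ≤ (μφ (Set.Ioc 0 v)).toReal := ENNReal.toReal_nonneg
      ring_nf
      nlinarith
    have hlb : ∀ v ∈ Set.Ioi (0:ℝ), rdZero φ ≤ slope φ 0 v := by
      intro v hv
      have hv' : (0:ℝ) < v := hv
      rw [slope_def_field, key_identity hconv hlsc hμφ hv'.le, sub_zero]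
      have h1 : (0:ℝ) ≤ (hinge μφ v).toReal := ENNReal.toReal_nonneg
      rw [le_div_iff₀ hv']
      nlinarith
    have hupper : Tendsto (fun v : ℝ => rdZero φ + (μφ (Set.Ioc 0 v)).toReal)
        (nhdsWithin 0 (Set.Ioi 0)) (nhds (rdZero φ)) := by
      have := (tendsto_const_nhds (x := rdZero φ)).add hμ0
      simpa using this
    refine tendsto_of_tendsto_of_tendsto_of_le_of_le' tendsto_const_nhds hupper ?_ ?_
    · filter_upwards [eventually_mem_nhdsWithin] with v hv using hlb v hv
    · filter_upwards [eventually_mem_nhdsWithin] with v hv using hub v hv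
  apply hsq.congr
  intro v
  rw [slope_def_field]

include hconv hlsc hμφ in
lemma rd_zero_eq : rightDeriv φ 0 = rdZero φ :=
  (hasDerivAt_zero' hconv hlsc hμφ).derivWithin (uniqueDiffWithinAt_Ioi 0)

end Key

section Slope

variable {φ : ℝ → ℝ} {μφ : Measure ℝ} [IsFiniteMeasure μφ]
variable (hconv : ConvexOn ℝ (Set.Ici 0) φ)
    (hlsc : LowerSemicontinuousOn φ (Set.Ici 0))
    (hμφ : ∀ a b : ℝ, 0 < a → a < b →
      μφ (Set.Ioc a b) = ENNReal.ofReal (rightDeriv φ b - rightDeriv φ a))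

lemma tendsto_hinge_div :
    Tendsto (fun n : ℕ => (hinge μφ ((n:ℝ)+1)).toReal / ((n:ℝ)+1)) atTop
      (nhds (μφ (Set.Ioi 0)).toReal) := by
  set f : ℕ → ℝ → ℝ≥0∞ := fun n t => ENNReal.ofReal ((((n:ℝ)+1) - t)/((n:ℝ)+1)) with hf_def
  have hA : ∀ n : ℕ, (∫⁻ t in Set.Ioi (0:ℝ), f n t ∂μφ)
      = hinge μφ ((n:ℝ)+1) * (ENNReal.ofReal ((n:ℝ)+1))⁻¹ := by
    intro n
    have hn1 : (0:ℝ) < (n:ℝ)+1 := by positivity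
    unfold hinge
    rw [← lintegral_mul_const' ((ENNReal.ofReal ((n:ℝ)+1))⁻¹) _
      (ENNReal.inv_ne_top.mpr (by simpa using hn1))]
    apply setLIntegral_congr_fun_ae measurableSet_Ioi
    filter_upwards with t ht
    have ht' : (0:ℝ) < t := ht
    simp only [hf_def]
    rw [ENNReal.ofReal_div_of_pos hn1, ENNReal.ofReal_sub _ ht'.le, div_eq_mul_inv]
  have hT : Tendsto (fun n : ℕ => ∫⁻ t in Set.Ioi (0:ℝ), f n t ∂μφ) atTop
      (nhds (μφ (Set.Ioi 0))) := by
    have hmeas : ∀ n : ℕ, AEMeasurable (f n) (μφ.restrict (Set.Ioi 0)) := by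
      intro n
      apply Measurable.aemeasurable
      apply ENNReal.measurable_ofReal.comp
      fun_prop
    have hmono : ∀ᵐ t ∂(μφ.restrict (Set.Ioi 0)), Monotone fun n => f n t := by
      filter_upwards [ae_restrict_mem measurableSet_Ioi] with t ht
      intro n m hnm
      apply ENNReal.ofReal_le_ofReal
      have ht' : (0:ℝ) < t := ht
      have hn : (0:ℝ) < (n:ℝ)+1 := by positivity
      have hm : (0:ℝ) < (m:ℝ)+1 := by positivity
      have hc : (n:ℝ) ≤ (m:ℝ) := Nat.cast_le.mpr hnm
      rw [div_le_div_iff₀ hn hm]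
      nlinarith
    have htend : ∀ᵐ t ∂(μφ.restrict (Set.Ioi 0)),
        Tendsto (fun n => f n t) atTop (nhds 1) := by
      filter_upwards [ae_restrict_mem measurableSet_Ioi] with t ht
      have h2 : Tendsto (fun n : ℕ => (((n:ℝ)+1) - t)/((n:ℝ)+1)) atTop (nhds 1) := by
        have h3 : ∀ n : ℕ, (((n:ℝ)+1) - t)/((n:ℝ)+1) = 1 - t * (1/((n:ℝ)+1)) := by
          intro n
          have hn : (0:ℝ) < (n:ℝ)+1 := by positivity
          field_simp
        rw [funext h3]
        have h4 : Tendsto (fun n : ℕ => 1 - t * (1/((n:ℝ)+1))) atTop (nhds (1 - t * 0)) :=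
          tendsto_const_nhds.sub (tendsto_const_nhds.mul tendsto_one_div_add_atTop_nhds_zero_nat)
        simpa using h4
      have := (ENNReal.continuous_ofReal.tendsto 1).comp h2
      simpa [hf_def, Function.comp_def] using this
    have := lintegral_tendsto_of_tendsto_of_monotone hmeas hmono htend
    simpa using this
  rw [funext hA] at hT
  have hT2 := (ENNReal.tendsto_toReal (measure_ne_top μφ _)) |>.comp hT
  apply hT2.congr
  intro n
  have hn1 : (0:ℝ) < (n:ℝ)+1 := by positivity
  simp only [Function.comp_apply]
  rw [ENNReal.toReal_mul, ENNReal.toReal_inv, ENNReal.toReal_ofReal hn1.le, div_eq_mul_inv]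

include hconv hlsc hμφ in
lemma slope_infty {s : ℝ} (hs : Tendsto (fun t : ℝ => φ t / t) atTop (nhds s)) :
    s = rdZero φ + (μφ (Set.Ioi 0)).toReal := by
  have hnat : Tendsto (fun n : ℕ => φ ((n:ℝ)+1) / ((n:ℝ)+1)) atTop (nhds s) :=
    hs.comp (tendsto_atTop_add_const_right _ 1 tendsto_natCast_atTop_atTop)
  have hEq : ∀ n : ℕ, φ ((n:ℝ)+1) / ((n:ℝ)+1)
      = φ 0 * (1/((n:ℝ)+1)) + rdZero φ + (hinge μφ ((n:ℝ)+1)).toReal / ((n:ℝ)+1) := by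
    intro n
    have hn1 : (0:ℝ) < (n:ℝ)+1 := by positivity
    rw [key_identity hconv hlsc hμφ hn1.le]
    field_simp
  rw [funext hEq] at hnat
  have hlim : Tendsto (fun n : ℕ => φ 0 * (1/((n:ℝ)+1)) + rdZero φ
      + (hinge μφ ((n:ℝ)+1)).toReal / ((n:ℝ)+1)) atTop
      (nhds (φ 0 * 0 + rdZero φ + (μφ (Set.Ioi 0)).toReal)) :=
    ((tendsto_const_nhds.mul tendsto_one_div_add_atTop_nhds_zero_nat).add
      tendsto_const_nhds).add (tendsto_hinge_div)
  have := tendsto_nhds_unique hnat hlim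
  rw [this]; ring

end Slope

section ERealStuff

lemma erealToENNReal_coe (a : ℝ) : erealToENNReal ((a : ℝ) : EReal) = ENNReal.ofReal a := by
  unfold erealToENNReal
  rw [if_neg (EReal.coe_ne_top a), EReal.toReal_coe]

lemma ennreal_coe_eq_coe_toReal {x : ℝ≥0∞} (hx : x ≠ ⊤) :
    (x : EReal) = ((x.toReal : ℝ) : EReal) := by
  have h1 : ((x : EReal)).toReal = x.toReal := EReal.toReal_coe_ennreal
  rw [← h1]
  exact (EReal.coe_toReal (by simpa [EReal.coe_ennreal_eq_top_iff] using hx)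
    (EReal.coe_ennreal_ne_bot x)).symm

lemma erealIntegral_of_integrable {Ω : Type} [MeasurableSpace Ω] {μ : Measure Ω} {f : Ω → ℝ}
    (hf : Integrable f μ) :
    erealIntegral μ (fun x => ((f x : ℝ) : EReal)) = ((∫ x, f x ∂μ : ℝ) : EReal) := by
  unfold erealIntegral
  have hneg : ∀ x, -((f x : ℝ) : EReal) = (((-f x : ℝ)) : EReal) := fun x => by
    rw [← EReal.coe_neg]
  simp only [hneg, erealToENNReal_coe]
  have hA : (∫⁻ x, ENNReal.ofReal (f x) ∂μ) ≠ ⊤ := by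
    apply ne_of_lt
    calc ∫⁻ x, ENNReal.ofReal (f x) ∂μ ≤ ∫⁻ x, (‖f x‖₊ : ℝ≥0∞) ∂μ :=
        lintegral_mono fun x => Real.ofReal_le_enorm _
      _ < ⊤ := hf.2
  have hB : (∫⁻ x, ENNReal.ofReal (-f x) ∂μ) ≠ ⊤ := by
    apply ne_of_lt
    calc ∫⁻ x, ENNReal.ofReal (-f x) ∂μ ≤ ∫⁻ x, (‖f x‖₊ : ℝ≥0∞) ∂μ :=
        lintegral_mono fun x => by
          rw [← nnnorm_neg]
          exact Real.ofReal_le_enorm _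
      _ < ⊤ := hf.2
  rw [ennreal_coe_eq_coe_toReal hA, ennreal_coe_eq_coe_toReal hB, ← EReal.coe_sub]
  congr 1
  rw [integral_eq_lintegral_pos_part_sub_lintegral_neg_part hf]

end ERealStuff


lemma recession_eq {φ : ℝ → ℝ} {s : ℝ}
    (hs : Tendsto (fun t : ℝ => φ t / t) atTop (nhds s)) :
    recessionSlope (fun u : ℝ => ((φ u : ℝ) : EReal)) = ((s : ℝ) : EReal) := by
  unfold recessionSlope
  have h1 : (fun t : ℝ => ((φ t : ℝ) : EReal) * ((t⁻¹ : ℝ) : EReal))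
      = fun t : ℝ => ((φ t * t⁻¹ : ℝ) : EReal) := funext fun t => (EReal.coe_mul _ _).symm
  rw [h1]
  have h2 : Tendsto (fun t : ℝ => ((φ t * t⁻¹ : ℝ) : EReal)) atTop (nhds ((s : ℝ) : EReal)) := by
    rw [EReal.tendsto_coe]
    simpa [div_eq_mul_inv] using hs
  exact h2.limsup_eq

end AuxAll

variable {X Y : Type} [MeasurableSpace X] [MeasurableSpace Y]

theorem hinge_representation_of_divergence
    [TopologicalSpace X] [PolishSpace X] [BorelSpace X]
    [TopologicalSpace Y] [PolishSpace Y] [BorelSpace Y]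
    (E : Set (X × Y)) (hE : IsClosed E)
    (νX : Measure X) (νY : Measure Y) [IsFiniteMeasure νX] [IsFiniteMeasure νY]
    (hνX : 0 < νX Set.univ) (hνY : 0 < νY Set.univ)
    (φ : ℝ → ℝ)
    (hconv : ConvexOn ℝ (Set.Ici 0) φ)
    (hlsc : LowerSemicontinuousOn φ (Set.Ici 0))
    (hslope : ∃ s : ℝ, Filter.Tendsto (fun t : ℝ => φ t / t) Filter.atTop (nhds s))
    (μφ : Measure ℝ) [IsFiniteMeasure μφ]
    (hμφ_carried : μφ (Set.Ioi (0 : ℝ))ᶜ = 0)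
    (hμφ : ∀ a b : ℝ, 0 < a → a < b →
      μφ (Set.Ioc a b) = ENNReal.ofReal (rightDeriv φ b - rightDeriv φ a)) :
    ∀ π ∈ Plans E νX,
      thetaDiv (fun u => ((φ u : ℝ) : EReal)) (π.map Prod.snd) νY
        = ((φ 0 : ℝ) : EReal) * ((νY Set.univ : ℝ≥0∞) : EReal)
          + ((rightDeriv φ 0 : ℝ) : EReal) * ((νX Set.univ : ℝ≥0∞) : EReal)
          + (((∫⁻ t in Set.Ioi (0 : ℝ), Overflow νY π t ∂μφ) : ℝ≥0∞) : EReal) := by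
  obtain ⟨s, hs⟩ := hslope
  intro π hπ
  obtain ⟨hπfin, hπE, hπfst⟩ := hπ
  haveI := hπfin
  set P : Measure Y := π.map Prod.snd with hP_def
  haveI : IsFiniteMeasure P := by
    constructor
    rw [hP_def, Measure.map_apply measurable_snd MeasurableSet.univ]
    exact measure_lt_top π _
  have hPuniv : P Set.univ = νX Set.univ := by
    rw [hP_def, Measure.map_apply measurable_snd MeasurableSet.univ, ← hπfst,
      Measure.map_apply measurable_fst MeasurableSet.univ]
    simp
  set S : ℝ≥0∞ := P.singularPart νY Set.univ with hS_def
  set A : ℝ≥0∞ := ∫⁻ y, P.rnDeriv νY y ∂νY with hA_def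
  have hSA : S + A = νX Set.univ := by
    have hdec : P Set.univ
        = (P.singularPart νY) Set.univ + (νY.withDensity (P.rnDeriv νY)) Set.univ := by
      conv_lhs => rw [P.haveLebesgueDecomposition_add νY]
      simp [Measure.add_apply]
    rw [withDensity_apply _ MeasurableSet.univ, setLIntegral_univ] at hdec
    rw [← hPuniv, hdec, hS_def, hA_def]
  have hS_ne : S ≠ ⊤ := by
    have h1 : S ≤ νX Set.univ := le_trans (le_add_right (le_refl S)) (le_of_eq hSA)
    exact ne_top_of_le_ne_top (measure_ne_top νX _) h1
  have hA_ne : A ≠ ⊤ := by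
    have h1 : A ≤ νX Set.univ := le_trans (le_add_left (le_refl A)) (le_of_eq hSA)
    exact ne_top_of_le_ne_top (measure_ne_top νX _) h1
  set r : Y → ℝ := fun y => (P.rnDeriv νY y).toReal with hr_def
  have hr_meas : Measurable r := (Measure.measurable_rnDeriv P νY).ennreal_toReal
  have hr_nonneg : ∀ y, 0 ≤ r y := fun y => ENNReal.toReal_nonneg
  have hae : ∀ᵐ y ∂νY, P.rnDeriv νY y < ⊤ := Measure.rnDeriv_lt_top P νY
  have h_ofReal : ∀ᵐ y ∂νY, ENNReal.ofReal (r y) = P.rnDeriv νY y :=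
    hae.mono fun y hy => ENNReal.ofReal_toReal hy.ne
  have hlint_r : ∫⁻ y, ENNReal.ofReal (r y) ∂νY = A := lintegral_congr_ae h_ofReal
  have hint_r : Integrable r νY := by
    apply integrable_toReal_of_lintegral_ne_top (Measure.measurable_rnDeriv P νY).aemeasurable
    rw [← hA_def]; exact hA_ne
  have hintegral_r : ∫ y, r y ∂νY = A.toReal :=
    integral_toReal (Measure.measurable_rnDeriv P νY).aemeasurable hae
  set M : ℝ≥0∞ := μφ (Set.Ioi 0) with hM_def
  have hseq : s = rdZero φ + M.toReal := slope_infty hconv hlsc hμφ hs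
  set c : ℝ := rdZero φ with hc_def
  set K : Y → ℝ≥0∞ := fun y => hinge μφ (r y) with hK_def
  have hK_meas : Measurable K := (Monotone.measurable (hinge_mono μφ)).comp hr_meas
  have hK_lt : ∀ y, K y < ⊤ := fun y => hinge_lt_top μφ (r y)
  have hK_bound : ∫⁻ y, K y ∂νY ≠ ⊤ := by
    apply ne_of_lt
    calc ∫⁻ y, K y ∂νY ≤ ∫⁻ y, ENNReal.ofReal (r y) * M ∂νY :=
          lintegral_mono fun y => hinge_le μφ (r y)
      _ = A * M := by rw [lintegral_mul_const' M _ (measure_ne_top μφ _), hlint_r]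
      _ < ⊤ := ENNReal.mul_lt_top hA_ne.lt_top (measure_lt_top μφ _)
  have hint_K : Integrable (fun y => (K y).toReal) νY :=
    integrable_toReal_of_lintegral_ne_top hK_meas.aemeasurable hK_bound
  have hintegral_K : ∫ y, (K y).toReal ∂νY = (∫⁻ y, K y ∂νY).toReal :=
    integral_toReal hK_meas.aemeasurable (Filter.Eventually.of_forall hK_lt)
  have hpt : (fun y => φ (r y)) = fun y => φ 0 + c * r y + (K y).toReal :=
    funext fun y => key_identity hconv hlsc hμφ (hr_nonneg y)
  have hint_φr : Integrable (fun y => φ (r y)) νY := by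
    rw [hpt]
    exact ((integrable_const _).add (hint_r.const_mul c)).add hint_K
  have hIφ : ∫ y, φ (r y) ∂νY
      = φ 0 * (νY Set.univ).toReal + c * A.toReal + (∫⁻ y, K y ∂νY).toReal := by
    have hint1 : Integrable (fun y => φ 0 + c * r y) νY := by
      simpa using (integrable_const (φ 0)).add (hint_r.const_mul c)
    rw [hpt, integral_add hint1 hint_K,
      integral_add (integrable_const _) (hint_r.const_mul c), integral_const,
      integral_const_mul c, hintegral_r, hintegral_K]
    simp [smul_eq_mul, mul_comm, Measure.real]
  have hswap : ∫⁻ y, K y ∂νY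
      = ∫⁻ t in Set.Ioi (0:ℝ), (∫⁻ y, (ENNReal.ofReal (r y) - ENNReal.ofReal t) ∂νY) ∂μφ := by
    have hmeas : Measurable (Function.uncurry
        fun (y : Y) (t : ℝ) => ENNReal.ofReal (r y) - ENNReal.ofReal t) :=
      ((ENNReal.measurable_ofReal.comp (hr_meas.comp measurable_fst)).sub
        (ENNReal.measurable_ofReal.comp measurable_snd))
    exact lintegral_lintegral_swap hmeas.aemeasurable
  have hinner : ∀ t : ℝ, ∫⁻ y, (P.rnDeriv νY y - ENNReal.ofReal t) ∂νY
      = ∫⁻ y, (ENNReal.ofReal (r y) - ENNReal.ofReal t) ∂νY := fun t =>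
    lintegral_congr_ae (h_ofReal.mono fun y hy => by
      show P.rnDeriv νY y - ENNReal.ofReal t = ENNReal.ofReal (r y) - ENNReal.ofReal t
      rw [hy])
  have hOint : ∫⁻ t in Set.Ioi (0:ℝ), Overflow νY π t ∂μφ = S * M + ∫⁻ y, K y ∂νY := by
    have h1 : ∫⁻ t in Set.Ioi (0:ℝ), Overflow νY π t ∂μφ
        = ∫⁻ t in Set.Ioi (0:ℝ),
            (S + ∫⁻ y, (ENNReal.ofReal (r y) - ENNReal.ofReal t) ∂νY) ∂μφ :=
      lintegral_congr fun t => by rw [Overflow, hinner t]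
    rw [h1, lintegral_add_left measurable_const, lintegral_const,
      Measure.restrict_apply_univ, hswap]
  have hO_ne : ∫⁻ t in Set.Ioi (0:ℝ), Overflow νY π t ∂μφ ≠ ⊤ := by
    rw [hOint]
    exact ENNReal.add_ne_top.mpr
      ⟨ENNReal.mul_ne_top hS_ne (measure_ne_top μφ _), hK_bound⟩
  have hreal : (∫⁻ t in Set.Ioi (0:ℝ), Overflow νY π t ∂μφ).toReal
      = S.toReal * M.toReal + (∫⁻ y, K y ∂νY).toReal := by
    rw [hOint, ENNReal.toReal_add (ENNReal.mul_ne_top hS_ne (measure_ne_top μφ _)) hK_bound,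
      ENNReal.toReal_mul]
  have hnX : (νX Set.univ).toReal = S.toReal + A.toReal := by
    rw [← hSA, ENNReal.toReal_add hS_ne hA_ne]
  rw [thetaDiv, erealIntegral_of_integrable hint_φr, recession_eq hs, hIφ,
    rd_zero_eq hconv hlsc hμφ]
  rw [ennreal_coe_eq_coe_toReal (measure_ne_top νY _),
    ennreal_coe_eq_coe_toReal (measure_ne_top νX _),
    ennreal_coe_eq_coe_toReal hS_ne, ennreal_coe_eq_coe_toReal hO_ne]
  rw [← EReal.coe_mul, ← EReal.coe_mul, ← EReal.coe_mul, ← EReal.coe_add, ← EReal.coe_add]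
  norm_cast
  rw [hreal, hnX, hseq]
  ring
end
end

section
/- Let (Ω0, Σ0) and (Ω1, Σ1) be measurable spaces, fix ι ∈ {0,1} and write ῑ := 1 − ι, let b be a finite measure on Ω_ῑ, and let σ, σ0 be finite measures on Ω0 × Ω1. Write ξ, ξ0 for the Ω_ι-marginals and ψ, ψ0 for the Ω_ῑ-marginals of σ, σ0, and assume ψ ≤ b, ψ0 ≤ b, and σ(Ω0 × Ω1) > σ0(Ω0 × Ω1). Let L := {y ∈ Ω_ῑ : (dψ0/db)(y) < 1}. Then there exist finite measures γ ≤ σ and γ0 ≤ σ0 on Ω0 × Ω1 with Ω_ι-marginals α, α0 and Ω_ῑ-marginals β, β0 such that: (i) α0 ≤ α and 0 ≠ α − α0 ≤ (ξ − ξ0)⁺, the positive part of the Jordan decomposition of ξ − ξ0; (ii) β0 ≤ β, the measure β − β0 is nonzero, and (β − β0)(Lᶜ) = 0; (iii) ψ0 − β0 + β ≤ b. -/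
/- STATEMENT 5: Measure-theoretic augmenting subplan
(Lemma `measure_theoretic_augmenting_subplan`).  The side `ι ∈ {0,1}` is formalized abstractly:
`X` plays the role of `Ω_ι` and `Y` of `Ω_ῑ`.  For finite measures, the truncated difference
`Measure.sub` (`ξ - ξ0`) is exactly the positive part `(ξ − ξ0)⁺` of the Jordan decomposition,
and `Lᶜ = {y | 1 ≤ dψ0/db y}`. -/

open MeasureTheory ProbabilityTheory Filter
open scoped ENNReal NNReal

noncomputable section

section AuxForAugmentingSubplan
open Set

namespace AugSubAux

variable {Z : Type*} [MeasurableSpace Z]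

theorem le_sub_add (μ ν : Measure Z) [IsFiniteMeasure μ] [IsFiniteMeasure ν] :
    μ ≤ (μ - ν) + ν := by
  obtain ⟨s, hs, hle1, hle2⟩ := hahn_decomposition (μ := μ) (ν := ν)
  set d := μ.restrict s - ν.restrict s with hd_def
  have hνμs : ν.restrict s ≤ μ.restrict s := by
    rw [Measure.le_iff]
    intro t ht
    rw [Measure.restrict_apply ht, Measure.restrict_apply ht]
    exact hle1 _ (ht.inter hs) inter_subset_right
  have hdapp : ∀ t : Set Z, MeasurableSet t → d t = μ (t ∩ s) - ν (t ∩ s) := by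
    intro t ht
    rw [hd_def, Measure.sub_apply ht hνμs, Measure.restrict_apply ht,
      Measure.restrict_apply ht]
  have hμd : μ ≤ d + ν := by
    rw [Measure.le_iff]
    intro t ht
    have h1 : μ t = μ (t ∩ s) + μ (t \ s) := (measure_inter_add_diff t hs).symm
    have h2 : μ (t \ s) ≤ ν (t \ s) :=
      hle2 _ (ht.diff hs) (fun z hz => hz.2)
    have h3 : μ (t ∩ s) ≤ (μ (t ∩ s) - ν (t ∩ s)) + ν (t ∩ s) := le_tsub_add
    calc μ t = μ (t ∩ s) + μ (t \ s) := h1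
    _ ≤ ((μ (t ∩ s) - ν (t ∩ s)) + ν (t ∩ s)) + ν (t \ s) := add_le_add h3 h2
    _ = (μ (t ∩ s) - ν (t ∩ s)) + (ν (t ∩ s) + ν (t \ s)) := by ring
    _ = d t + ν t := by rw [hdapp t ht, measure_inter_add_diff t hs]
  have hlow : d ≤ μ - ν := by
    rw [Measure.sub_def]
    refine le_sInf ?_
    intro d' hd'
    rw [Set.mem_setOf_eq] at hd'
    rw [Measure.le_iff]
    intro t ht
    rw [hdapp t ht]
    have := Measure.le_iff.mp hd' (t ∩ s) (ht.inter hs)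
    rw [Measure.add_apply] at this
    exact le_trans (tsub_le_iff_right.mpr this) (measure_mono inter_subset_left)
  exact le_trans hμd (add_le_add_left hlow ν)

theorem withDensity_min_eq {μ ν : Measure Z} [IsFiniteMeasure μ] (h : ν ≤ μ) :
    μ.withDensity (fun a => min 1 (ν.rnDeriv μ a)) = ν := by
  haveI : IsFiniteMeasure ν := isFiniteMeasure_of_le μ h
  have hle := Measure.rnDeriv_le_one_of_le h
  have hcongr : (fun a => min 1 (ν.rnDeriv μ a)) =ᵐ[μ] ν.rnDeriv μ := by
    filter_upwards [hle] with a ha using min_eq_right ha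
  rw [withDensity_congr_ae hcongr,
    Measure.withDensity_rnDeriv_eq _ _ (Measure.absolutelyContinuous_of_le h)]

theorem withDensity_min_le {μ : Measure Z} (w : Z → ℝ≥0∞) :
    μ.withDensity (fun a => min 1 (w a)) ≤ μ := by
  calc μ.withDensity (fun a => min 1 (w a)) ≤ μ.withDensity (fun _ => 1) :=
        withDensity_mono (Eventually.of_forall fun a => min_le_left _ _)
  _ = μ := by simp

theorem null_of_rnDeriv_zero {m Ω : Measure Z} [SigmaFinite m] [SigmaFinite Ω] (h : m ≪ Ω) :
    m {z | ¬ 0 < m.rnDeriv Ω z} = 0 := by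
  have hset : {z | ¬ 0 < m.rnDeriv Ω z} = {z | m.rnDeriv Ω z = 0} := by
    ext z; simp [pos_iff_ne_zero]
  have hmeas : MeasurableSet {z | m.rnDeriv Ω z = 0} :=
    (Measure.measurable_rnDeriv m Ω) (measurableSet_singleton 0)
  rw [hset]
  nth_rewrite 1 [← Measure.withDensity_rnDeriv_eq m Ω h]
  rw [withDensity_apply _ hmeas,
    setLIntegral_eq_zero_iff hmeas (Measure.measurable_rnDeriv m Ω)]
  exact Eventually.of_forall fun z hz => hz

end AugSubAux


namespace AugSubAux2

variable {X Y Z : Type*} [MeasurableSpace X] [MeasurableSpace Y] [MeasurableSpace Z]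

theorem map_withDensity_fst (m : Measure (X × Y)) {w : X → ℝ≥0∞} (hw : Measurable w) :
    (m.withDensity (fun p => w p.1)).map Prod.fst = (m.map Prod.fst).withDensity w := by
  ext s hs
  rw [Measure.map_apply measurable_fst hs,
    withDensity_apply _ (hs.preimage measurable_fst),
    withDensity_apply _ hs, setLIntegral_map hs hw measurable_fst]

theorem map_withDensity_snd (m : Measure (X × Y)) {w : Y → ℝ≥0∞} (hw : Measurable w) :
    (m.withDensity (fun p => w p.2)).map Prod.snd = (m.map Prod.snd).withDensity w := by
  ext s hs
  rw [Measure.map_apply measurable_snd hs,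
    withDensity_apply _ (hs.preimage measurable_snd),
    withDensity_apply _ hs, setLIntegral_map hs hw measurable_snd]

theorem map_fst_restrict_apply (σ : Measure (X × Y)) {B : Set Y} (hB : MeasurableSet B)
    {S : Set X} (hS : MeasurableSet S) :
    ((σ.restrict (Set.univ ×ˢ B)).map Prod.fst) S = σ (S ×ˢ B) := by
  rw [Measure.map_apply measurable_fst hS,
    Measure.restrict_apply (hS.preimage measurable_fst)]
  congr 1
  ext p
  simp [Set.mem_prod, and_comm]

theorem map_snd_restrict_apply (σ : Measure (X × Y)) {A : Set X} (hA : MeasurableSet A)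
    {T : Set Y} (hT : MeasurableSet T) :
    ((σ.restrict (A ×ˢ Set.univ)).map Prod.snd) T = σ (A ×ˢ T) := by
  rw [Measure.map_apply measurable_snd hT,
    Measure.restrict_apply (hT.preimage measurable_snd)]
  congr 1
  ext p
  simp [Set.mem_prod, and_comm]

theorem carried_snd {m σ : Measure (X × Y)} {B : Set Y} (hB : MeasurableSet B)
    (h : m ≤ σ.restrict (Set.univ ×ˢ B)) : (m.map Prod.snd) Bᶜ = 0 := by
  rw [Measure.map_apply measurable_snd hB.compl]
  refine le_antisymm ?_ (zero_le)
  calc m (Prod.snd ⁻¹' Bᶜ) ≤ (σ.restrict (Set.univ ×ˢ B)) (Prod.snd ⁻¹' Bᶜ) := h _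
  _ = σ ((Prod.snd ⁻¹' Bᶜ) ∩ (Set.univ ×ˢ B)) :=
      Measure.restrict_apply ((hB.compl).preimage measurable_snd)
  _ = σ ∅ := by congr 1; ext p; simp
  _ = 0 := measure_empty

theorem carried_fst {m σ : Measure (X × Y)} {A : Set X} (hA : MeasurableSet A)
    (h : m ≤ σ.restrict (A ×ˢ Set.univ)) : (m.map Prod.fst) Aᶜ = 0 := by
  rw [Measure.map_apply measurable_fst hA.compl]
  refine le_antisymm ?_ (zero_le)
  calc m (Prod.fst ⁻¹' Aᶜ) ≤ (σ.restrict (A ×ˢ Set.univ)) (Prod.fst ⁻¹' Aᶜ) := h _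
  _ = σ ((Prod.fst ⁻¹' Aᶜ) ∩ (A ×ˢ Set.univ)) :=
      Measure.restrict_apply ((hA.compl).preimage measurable_fst)
  _ = σ ∅ := by congr 1; ext p; simp
  _ = 0 := measure_empty

/-- The "min trick" measure: a nonzero common lower bound of `m₁.restrict S` and `m₂`. -/
def minTrick (Ω m₁ m₂ : Measure Z) (S : Set Z) : Measure Z :=
  Ω.withDensity (fun z => min (S.indicator (m₁.rnDeriv Ω) z) (m₂.rnDeriv Ω z))

theorem minTrick_meas (Ω m₁ m₂ : Measure Z) (S : Set Z) (hS : MeasurableSet S) :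
    Measurable (fun z => min (S.indicator (m₁.rnDeriv Ω) z) (m₂.rnDeriv Ω z)) :=
  ((Measure.measurable_rnDeriv m₁ Ω).indicator hS).min (Measure.measurable_rnDeriv m₂ Ω)

theorem minTrick_le_left {Ω m₁ : Measure Z} [SigmaFinite m₁] [SigmaFinite Ω] (m₂ : Measure Z) {S : Set Z}
    (hS : MeasurableSet S) (h1 : m₁ ≪ Ω) : minTrick Ω m₁ m₂ S ≤ m₁ := by
  calc minTrick Ω m₁ m₂ S ≤ Ω.withDensity (S.indicator (m₁.rnDeriv Ω)) :=
        withDensity_mono (Eventually.of_forall fun z => min_le_left _ _)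
  _ = (Ω.restrict S).withDensity (m₁.rnDeriv Ω) := withDensity_indicator hS _
  _ = (Ω.withDensity (m₁.rnDeriv Ω)).restrict S := (restrict_withDensity hS _).symm
  _ = m₁.restrict S := by rw [Measure.withDensity_rnDeriv_eq _ _ h1]
  _ ≤ m₁ := Measure.restrict_le_self

theorem minTrick_le_right (m₁ : Measure Z) {Ω m₂ : Measure Z} [SigmaFinite m₂] [SigmaFinite Ω] (S : Set Z)
    (h2 : m₂ ≪ Ω) : minTrick Ω m₁ m₂ S ≤ m₂ := by
  calc minTrick Ω m₁ m₂ S ≤ Ω.withDensity (m₂.rnDeriv Ω) :=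
        withDensity_mono (Eventually.of_forall fun z => min_le_right _ _)
  _ = m₂ := Measure.withDensity_rnDeriv_eq _ _ h2

theorem minTrick_ne_zero {Ω m₁ m₂ : Measure Z} {S : Set Z} (hS : MeasurableSet S)
    {T : Set Z} (hT : MeasurableSet T) (hTS : T ⊆ S)
    (h1 : ∀ z ∈ T, 0 < m₁.rnDeriv Ω z) (h2 : ∀ z ∈ T, 0 < m₂.rnDeriv Ω z)
    (hΩT : Ω T ≠ 0) : minTrick Ω m₁ m₂ S ≠ 0 := by
  intro hzero
  have h0 : (minTrick Ω m₁ m₂ S) T = 0 := by rw [hzero]; rfl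
  rw [minTrick, withDensity_apply _ hT,
    setLIntegral_eq_zero_iff hT (minTrick_meas Ω m₁ m₂ S hS)] at h0
  have : T ⊆ {z | z ∈ T → min (S.indicator (m₁.rnDeriv Ω) z) (m₂.rnDeriv Ω z) = 0}ᶜ := by
    intro z hz
    simp only [Set.mem_compl_iff, Set.mem_setOf_eq, not_forall]
    refine ⟨hz, ?_⟩
    have : S.indicator (m₁.rnDeriv Ω) z = m₁.rnDeriv Ω z := Set.indicator_of_mem (hTS hz) _
    rw [this]
    exact (lt_min (h1 z hz) (h2 z hz)).ne'
  exact hΩT (le_antisymm (le_trans (measure_mono this) (le_of_eq h0)) (zero_le))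

end AugSubAux2


namespace AugSubMain

variable {X Y : Type} [MeasurableSpace X] [MeasurableSpace Y]

/-- `L = {y | dψ0/db y < 1}`. -/
def Lset (b : Measure Y) (σ0 : Measure (X × Y)) : Set Y :=
  {y | (σ0.map Prod.snd).rnDeriv b y < 1}

def chi (σ σ0 : Measure (X × Y)) : Measure X := σ.map Prod.fst + σ0.map Prod.fst

def om (b : Measure Y) (σ σ0 : Measure (X × Y)) : Measure Y :=
  b + σ.map Prod.snd + σ0.map Prod.snd

def kcap (b : Measure Y) (σ0 : Measure (X × Y)) : Measure Y :=
  (b - σ0.map Prod.snd).restrict (Lset b σ0)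

def lam (σ : Measure (X × Y)) (B : Set Y) : Measure X :=
  (σ.restrict (Set.univ ×ˢ B)).map Prod.fst

def Aset (σ σ0 : Measure (X × Y)) (B : Set Y) : Set X :=
  {x | 0 < (lam σ B).rnDeriv (chi σ σ0) x}

def kap (σ0 : Measure (X × Y)) (A : Set X) : Measure Y :=
  (σ0.restrict (A ×ˢ Set.univ)).map Prod.snd

def BB (b : Measure Y) (σ σ0 : Measure (X × Y)) : ℕ → Set Y
  | 0 => Lset b σ0
  | (k+1) => BB b σ σ0 k ∪
      {y | 0 < (kap σ0 (Aset σ σ0 (BB b σ σ0 k))).rnDeriv (om b σ σ0) y}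

variable (b : Measure Y) (σ σ0 : Measure (X × Y))

theorem measurable_Lset : MeasurableSet (Lset b σ0) :=
  measurableSet_lt (Measure.measurable_rnDeriv _ _) measurable_const

theorem measurable_Aset (B : Set Y) : MeasurableSet (Aset σ σ0 B) :=
  measurableSet_lt measurable_const (Measure.measurable_rnDeriv _ _)

theorem measurable_BB : ∀ k, MeasurableSet (BB b σ σ0 k)
  | 0 => measurable_Lset b σ0
  | (k+1) => (measurable_BB k).union
      (measurableSet_lt measurable_const (Measure.measurable_rnDeriv _ _))

theorem BB_mono (k : ℕ) : BB b σ σ0 k ⊆ BB b σ σ0 (k+1) := Set.subset_union_left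

theorem lam_le (B : Set Y) : lam σ B ≤ σ.map Prod.fst :=
  Measure.map_mono Measure.restrict_le_self measurable_fst

theorem kap_le (A : Set X) : kap σ0 A ≤ σ0.map Prod.snd :=
  Measure.map_mono Measure.restrict_le_self measurable_snd

theorem lam_ac (B : Set Y) : lam σ B ≪ chi σ σ0 :=
  Measure.absolutelyContinuous_of_le
    (le_trans (lam_le σ B) (Measure.le_add_right le_rfl))

theorem kap_ac (A : Set X) : kap σ0 A ≪ om b σ σ0 :=
  Measure.absolutelyContinuous_of_le
    (le_trans (kap_le σ0 A) (Measure.le_add_left le_rfl))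

theorem psi_le_om : σ.map Prod.snd ≤ om b σ σ0 := by
  rw [om, add_assoc]
  exact le_trans (Measure.le_add_right le_rfl) (Measure.le_add_left le_rfl)

theorem psi0_le_om : σ0.map Prod.snd ≤ om b σ σ0 := Measure.le_add_left le_rfl

theorem b_le_om : b ≤ om b σ σ0 := by
  rw [om]
  exact le_trans (Measure.le_add_right le_rfl) (Measure.le_add_right le_rfl)

theorem kcap_le_b : kcap b σ0 ≤ b :=
  le_trans Measure.restrict_le_self Measure.sub_le

theorem kcap_ac : kcap b σ0 ≪ om b σ σ0 :=
  Measure.absolutelyContinuous_of_le (le_trans (kcap_le_b b σ0) (b_le_om b σ σ0))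

/-- On `L`, any set where the slack `b - ψ0` vanishes is `b`-null. -/
theorem b_null_of_kcap_null [IsFiniteMeasure b] (hψ0b : σ0.map Prod.snd ≤ b)
    {S : Set Y} (hS : MeasurableSet S) (hSL : S ⊆ Lset b σ0)
    (h : (b - σ0.map Prod.snd) S = 0) : b S = 0 := by
  haveI : IsFiniteMeasure (σ0.map Prod.snd) := isFiniteMeasure_of_le b hψ0b
  set ψ0 := σ0.map Prod.snd with hψ0def
  set f := ψ0.rnDeriv b with hfdef
  have hbS : b S ≤ ψ0 S := by
    rw [Measure.sub_apply hS hψ0b] at h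
    exact tsub_eq_zero_iff_le.mp h
  have hψ0repr : ∀ T : Set Y, MeasurableSet T → ψ0 T = ∫⁻ y in T, f y ∂b := by
    intro T hT
    conv_lhs => rw [← Measure.withDensity_rnDeriv_eq ψ0 b
      (Measure.absolutelyContinuous_of_le hψ0b)]
    rw [withDensity_apply _ hT]
  set Sn : ℕ → Set Y := fun n => S ∩ {y | f y ≤ 1 - (↑(n+1) : ℝ≥0∞)⁻¹} with hSndef
  have hSnmeas : ∀ n, MeasurableSet (Sn n) := fun n =>
    hS.inter (measurableSet_le (Measure.measurable_rnDeriv _ _) measurable_const)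
  have hSnnull : ∀ n, b (Sn n) = 0 := by
    intro n
    have hsplitb : b (Sn n) + b (S \ {y | f y ≤ 1 - (↑(n+1) : ℝ≥0∞)⁻¹}) = b S :=
      measure_inter_add_diff S (measurableSet_le (Measure.measurable_rnDeriv _ _)
        measurable_const)
    have hsplitψ : ψ0 (Sn n) + ψ0 (S \ {y | f y ≤ 1 - (↑(n+1) : ℝ≥0∞)⁻¹}) = ψ0 S :=
      measure_inter_add_diff S (measurableSet_le (Measure.measurable_rnDeriv _ _)
        measurable_const)
    have h1 : ψ0 (Sn n) ≤ (1 - (↑(n+1) : ℝ≥0∞)⁻¹) * b (Sn n) := by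
      rw [hψ0repr _ (hSnmeas n)]
      calc ∫⁻ y in Sn n, f y ∂b ≤ ∫⁻ _ in Sn n, (1 - (↑(n+1) : ℝ≥0∞)⁻¹) ∂b :=
            setLIntegral_mono measurable_const (fun y hy => hy.2)
      _ = (1 - (↑(n+1) : ℝ≥0∞)⁻¹) * b (Sn n) := by
            rw [setLIntegral_const]
    have h2 : ψ0 (S \ {y | f y ≤ 1 - (↑(n+1) : ℝ≥0∞)⁻¹}) ≤
        b (S \ {y | f y ≤ 1 - (↑(n+1) : ℝ≥0∞)⁻¹}) := hψ0b _
    have hchain : b (Sn n) + b (S \ {y | f y ≤ 1 - (↑(n+1) : ℝ≥0∞)⁻¹}) ≤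
        (1 - (↑(n+1) : ℝ≥0∞)⁻¹) * b (Sn n) +
          b (S \ {y | f y ≤ 1 - (↑(n+1) : ℝ≥0∞)⁻¹}) := by
      rw [hsplitb]
      calc b S ≤ ψ0 S := hbS
      _ = ψ0 (Sn n) + ψ0 (S \ {y | f y ≤ 1 - (↑(n+1) : ℝ≥0∞)⁻¹}) := hsplitψ.symm
      _ ≤ _ := add_le_add h1 h2
    have hcancel : b (Sn n) ≤ (1 - (↑(n+1) : ℝ≥0∞)⁻¹) * b (Sn n) :=
      ENNReal.le_of_add_le_add_right (measure_ne_top b _) hchain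
    by_contra hne
    have hlt : (1 - (↑(n+1) : ℝ≥0∞)⁻¹) * b (Sn n) < 1 * b (Sn n) := by
      refine (ENNReal.mul_lt_mul_iff_left hne (measure_ne_top b _)).mpr ?_
      refine ENNReal.sub_lt_self ENNReal.one_ne_top one_ne_zero ?_
      simp [Nat.cast_add]
    rw [one_mul] at hlt
    exact absurd hcancel (not_le.mpr hlt)
  have hcover : S ⊆ ⋃ n, Sn n := by
    intro y hy
    have hfy : f y < 1 := hSL hy
    have hpos : (1 : ℝ≥0∞) - f y ≠ 0 := by
      rw [← pos_iff_ne_zero]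
      exact tsub_pos_iff_lt.mpr hfy
    obtain ⟨n, hn⟩ := ENNReal.exists_inv_nat_lt hpos
    refine Set.mem_iUnion.mpr ⟨n, hy, ?_⟩
    have hmono : (↑(n+1) : ℝ≥0∞)⁻¹ ≤ (↑n : ℝ≥0∞)⁻¹ := by
      refine ENNReal.inv_le_inv.mpr ?_
      exact_mod_cast Nat.le_succ n
    have hadd : f y + (↑(n+1) : ℝ≥0∞)⁻¹ ≤ 1 := by
      calc f y + (↑(n+1) : ℝ≥0∞)⁻¹ ≤ f y + (1 - f y) :=
            add_le_add le_rfl (le_trans hmono hn.le)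
      _ = 1 := add_tsub_cancel_of_le hfy.le
    exact ENNReal.le_sub_of_add_le_right (by simp) hadd
  refine le_antisymm ?_ (zero_le)
  calc b S ≤ b (⋃ n, Sn n) := measure_mono hcover
  _ ≤ ∑' n, b (Sn n) := measure_iUnion_le _
  _ = 0 := by simp [hSnnull]

/-- Off `L`, `ψ0` dominates `b`. -/
theorem b_le_psi0_on_Lc [IsFiniteMeasure b] (hψ0b : σ0.map Prod.snd ≤ b)
    {T : Set Y} (hT : MeasurableSet T) (hTL : T ⊆ (Lset b σ0)ᶜ) :
    b T ≤ (σ0.map Prod.snd) T := by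
  haveI : IsFiniteMeasure (σ0.map Prod.snd) := isFiniteMeasure_of_le b hψ0b
  have hrepr : (σ0.map Prod.snd) T = ∫⁻ y in T, (σ0.map Prod.snd).rnDeriv b y ∂b := by
    conv_lhs => rw [← Measure.withDensity_rnDeriv_eq (σ0.map Prod.snd) b
      (Measure.absolutelyContinuous_of_le hψ0b)]
    rw [withDensity_apply _ hT]
  rw [hrepr]
  calc b T = ∫⁻ _ in T, 1 ∂b := by rw [setLIntegral_one]
  _ ≤ ∫⁻ y in T, (σ0.map Prod.snd).rnDeriv b y ∂b := by
      refine setLIntegral_mono (Measure.measurable_rnDeriv _ _) (fun y hy => ?_)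
      exact not_lt.mp (hTL hy)

end AugSubMain


namespace ScratchHelpers
variable {Z : Type*} [MeasurableSpace Z]

theorem smul_mono {μ ν : Measure Z} (c : ℝ≥0∞) (h : μ ≤ ν) : c • μ ≤ c • ν := by
  rw [Measure.le_iff']
  intro s
  simp only [Measure.smul_apply, smul_eq_mul]
  exact mul_le_mul_right (Measure.le_iff'.mp h s) c

theorem halfSmul_le_self (μ : Measure Z) : (2 : ℝ≥0∞)⁻¹ • μ ≤ μ := by
  rw [Measure.le_iff']
  intro s
  simp only [Measure.smul_apply, smul_eq_mul]
  calc (2 : ℝ≥0∞)⁻¹ * μ s ≤ 1 * μ s := by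
        refine mul_le_mul_left ?_ _
        simp [ENNReal.inv_le_one]
  _ = μ s := one_mul _

theorem half_add_le {m1 m2 M : Measure Z} (h1 : m1 ≤ M) (h2 : m2 ≤ M) :
    (2 : ℝ≥0∞)⁻¹ • (m1 + m2) ≤ M := by
  rw [Measure.le_iff']
  intro s
  simp only [Measure.smul_apply, Measure.add_apply, smul_eq_mul]
  calc (2 : ℝ≥0∞)⁻¹ * (m1 s + m2 s) ≤ (2 : ℝ≥0∞)⁻¹ * (M s + M s) :=
        mul_le_mul_right (add_le_add (Measure.le_iff'.mp h1 s) (Measure.le_iff'.mp h2 s)) _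
  _ = M s := by
      rw [← two_mul, ← mul_assoc, ENNReal.inv_mul_cancel two_ne_zero ENNReal.ofNat_ne_top,
        one_mul]

theorem map_univ_fst {X Y : Type} [MeasurableSpace X] [MeasurableSpace Y]
    (m : Measure (X × Y)) : (m.map Prod.fst) Set.univ = m Set.univ := by
  rw [Measure.map_apply measurable_fst MeasurableSet.univ, Set.preimage_univ]

theorem map_univ_snd {X Y : Type} [MeasurableSpace X] [MeasurableSpace Y]
    (m : Measure (X × Y)) : (m.map Prod.snd) Set.univ = m Set.univ := by
  rw [Measure.map_apply measurable_snd MeasurableSet.univ, Set.preimage_univ]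

end ScratchHelpers


namespace AugSubMain
open AugSubAux AugSubAux2 ScratchHelpers

variable {X Y : Type} [MeasurableSpace X] [MeasurableSpace Y]

theorem auxR (b : Measure Y) (σ σ0 : Measure (X × Y))
    [IsFiniteMeasure b] [IsFiniteMeasure σ] [IsFiniteMeasure σ0]
    (hψ : σ.map Prod.snd ≤ b) (hψ0 : σ0.map Prod.snd ≤ b) (k : ℕ) :
    ∀ ρ : Measure X, ρ ≠ 0 → ρ ≤ lam σ (BB b σ σ0 k) →
    ∃ g g0 : Measure (X × Y), g ≤ σ ∧ g0 ≤ σ0 ∧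
      g0.map Prod.fst ≤ g.map Prod.fst ∧
      g.map Prod.fst ≤ g0.map Prod.fst + ρ ∧
      g0.map Prod.snd ≤ g.map Prod.snd ∧
      g.map Prod.snd ≤ g0.map Prod.snd + kcap b σ0 ∧
      g0 Set.univ < g Set.univ := by
  induction k using Nat.strong_induction_on with
  | _ k IH =>
  intro ρ hρne hρlam
  haveI hlamfin : IsFiniteMeasure (lam σ (BB b σ σ0 k)) :=
    isFiniteMeasure_of_le (σ.map Prod.fst) (lam_le σ _)
  haveI hρfin : IsFiniteMeasure ρ := isFiniteMeasure_of_le _ hρlam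
  haveI homfin : IsFiniteMeasure (om b σ σ0) := by unfold om; infer_instance
  haveI hchifin : IsFiniteMeasure (chi σ σ0) := by unfold chi; infer_instance
  haveI hkcapfin : IsFiniteMeasure (kcap b σ0) := isFiniteMeasure_of_le b (kcap_le_b b σ0)
  -- the forward push
  set push := (σ.restrict (Set.univ ×ˢ BB b σ σ0 k)).withDensity
      (fun p => min 1 (ρ.rnDeriv (lam σ (BB b σ σ0 k)) p.1)) with hpushdef
  have hpush_le_r : push ≤ σ.restrict (Set.univ ×ˢ BB b σ σ0 k) :=
    withDensity_min_le _
  have hpush_le : push ≤ σ := le_trans hpush_le_r Measure.restrict_le_self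
  haveI : IsFiniteMeasure push := isFiniteMeasure_of_le σ hpush_le
  have hpush_fst : push.map Prod.fst = ρ := by
    rw [hpushdef, map_withDensity_fst _
        (measurable_const.min (Measure.measurable_rnDeriv ρ (lam σ (BB b σ σ0 k))))]
    exact withDensity_min_eq hρlam
  set τ := push.map Prod.snd with hτdef
  haveI : IsFiniteMeasure τ := by rw [hτdef]; exact Measure.isFiniteMeasure_map _ _
  have hτ_le_ψ : τ ≤ σ.map Prod.snd := Measure.map_mono hpush_le measurable_snd
  have hτ_le_om : τ ≤ om b σ σ0 := le_trans hτ_le_ψ (psi_le_om b σ σ0)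
  have hτ_ac : τ ≪ om b σ σ0 := Measure.absolutelyContinuous_of_le hτ_le_om
  have hτuniv : τ Set.univ = ρ Set.univ := by
    rw [hτdef, map_univ_snd, ← map_univ_fst push, hpush_fst]
  have hτuniv_ne : τ Set.univ ≠ 0 := by
    rw [hτuniv]
    exact (Measure.measure_univ_pos.mpr hρne).ne'
  have hτBc : τ (BB b σ σ0 k)ᶜ = 0 := carried_snd (measurable_BB b σ σ0 k) hpush_le_r
  -- ABSORB construction (works whenever mass reaches L)
  have habsorb : τ (Lset b σ0) ≠ 0 →
      ∃ g g0 : Measure (X × Y), g ≤ σ ∧ g0 ≤ σ0 ∧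
        g0.map Prod.fst ≤ g.map Prod.fst ∧
        g.map Prod.fst ≤ g0.map Prod.fst + ρ ∧
        g0.map Prod.snd ≤ g.map Prod.snd ∧
        g.map Prod.snd ≤ g0.map Prod.snd + kcap b σ0 ∧
        g0 Set.univ < g Set.univ := by
    intro hL
    set θ := minTrick (om b σ σ0) τ (kcap b σ0) (Lset b σ0) with hθdef
    have hθτ : θ ≤ τ := minTrick_le_left _ (measurable_Lset b σ0) hτ_ac
    have hθκ : θ ≤ kcap b σ0 := minTrick_le_right _ _ (kcap_ac b σ σ0)
    have hθne : θ ≠ 0 := by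
      set pos1 := {y | 0 < τ.rnDeriv (om b σ σ0) y} with hpos1def
      set pos2 := {y | 0 < (kcap b σ0).rnDeriv (om b σ σ0) y} with hpos2def
      have hpos1meas : MeasurableSet pos1 :=
        measurableSet_lt measurable_const (Measure.measurable_rnDeriv _ _)
      have hpos2meas : MeasurableSet pos2 :=
        measurableSet_lt measurable_const (Measure.measurable_rnDeriv _ _)
      have h1 : τ (Lset b σ0 ∩ pos1 ∩ pos2ᶜ) = 0 := by
        set S' := Lset b σ0 ∩ pos1 ∩ pos2ᶜ with hS'def
        have hS'meas : MeasurableSet S' :=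
          ((measurable_Lset b σ0).inter hpos1meas).inter hpos2meas.compl
        have hS'L : S' ⊆ Lset b σ0 := fun y hy => hy.1.1
        have hκS' : kcap b σ0 S' = 0 := by
          refine le_antisymm (le_trans (measure_mono ?_)
            (le_of_eq (null_of_rnDeriv_zero (kcap_ac b σ σ0)))) (zero_le)
          intro y hy
          exact hy.2
        have hbS' : b S' = 0 := by
          refine b_null_of_kcap_null b σ0 hψ0 hS'meas hS'L ?_
          rwa [kcap, Measure.restrict_apply hS'meas,
            Set.inter_eq_self_of_subset_left hS'L] at hκS'
        refine le_antisymm ?_ (zero_le)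
        calc τ S' ≤ (σ.map Prod.snd) S' := Measure.le_iff'.mp hτ_le_ψ S'
        _ ≤ b S' := Measure.le_iff'.mp hψ S'
        _ = 0 := hbS'
      have h2 : τ (Lset b σ0 \ pos1) = 0 := by
        refine le_antisymm (le_trans (measure_mono ?_)
          (le_of_eq (null_of_rnDeriv_zero hτ_ac))) (zero_le)
        intro y hy
        exact hy.2
      have hτT : τ (Lset b σ0 ∩ pos1 ∩ pos2) ≠ 0 := by
        intro hτT0
        apply hL
        have hcover : Lset b σ0 ⊆ (Lset b σ0 ∩ pos1 ∩ pos2) ∪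
            (Lset b σ0 ∩ pos1 ∩ pos2ᶜ) ∪ (Lset b σ0 \ pos1) := by
          intro y hy
          by_cases hy1 : y ∈ pos1
          · by_cases hy2 : y ∈ pos2
            · exact Or.inl (Or.inl ⟨⟨hy, hy1⟩, hy2⟩)
            · exact Or.inl (Or.inr ⟨⟨hy, hy1⟩, hy2⟩)
          · exact Or.inr ⟨hy, hy1⟩
        refine le_antisymm ?_ (zero_le)
        calc τ (Lset b σ0) ≤ τ ((Lset b σ0 ∩ pos1 ∩ pos2) ∪
            (Lset b σ0 ∩ pos1 ∩ pos2ᶜ) ∪ (Lset b σ0 \ pos1)) := measure_mono hcover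
        _ ≤ τ ((Lset b σ0 ∩ pos1 ∩ pos2) ∪ (Lset b σ0 ∩ pos1 ∩ pos2ᶜ)) +
            τ (Lset b σ0 \ pos1) := measure_union_le _ _
        _ ≤ (τ (Lset b σ0 ∩ pos1 ∩ pos2) + τ (Lset b σ0 ∩ pos1 ∩ pos2ᶜ)) +
            τ (Lset b σ0 \ pos1) := add_le_add_left (measure_union_le _ _) _
        _ = 0 := by rw [hτT0, h1, h2, add_zero, add_zero]
      have homT : (om b σ σ0) (Lset b σ0 ∩ pos1 ∩ pos2) ≠ 0 := fun h0 => hτT (hτ_ac h0)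
      exact minTrick_ne_zero (measurable_Lset b σ0)
        (((measurable_Lset b σ0).inter hpos1meas).inter hpos2meas)
        (fun y hy => hy.1.1) (fun y hy => hy.1.2) (fun y hy => hy.2) homT
    set g := push.withDensity (fun p => min 1 (θ.rnDeriv τ p.2)) with hgdef
    have hg_le_push : g ≤ push := withDensity_min_le _
    have hg_snd : g.map Prod.snd = θ := by
      rw [hgdef, map_withDensity_snd _
        (measurable_const.min (Measure.measurable_rnDeriv θ τ)), ← hτdef]
      exact withDensity_min_eq hθτ
    refine ⟨g, 0, le_trans hg_le_push hpush_le, Measure.zero_le σ0, ?_, ?_, ?_, ?_, ?_⟩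
    · rw [Measure.map_zero]
      exact Measure.zero_le _
    · rw [Measure.map_zero, zero_add, ← hpush_fst]
      exact Measure.map_mono hg_le_push measurable_fst
    · rw [Measure.map_zero]
      exact Measure.zero_le _
    · rw [Measure.map_zero, zero_add, hg_snd]
      exact hθκ
    · have hpos : 0 < g Set.univ := by
        rw [← map_univ_snd g, hg_snd]
        exact Measure.measure_univ_pos.mpr hθne
      simpa using hpos
  rcases eq_or_ne (τ (Lset b σ0)) 0 with hL | hL
  swap
  · exact habsorb hL
  -- BOUNCE case : all the pushed mass sits on intermediate layers
  have hex : ∃ j, j < k ∧ τ (BB b σ σ0 (j+1) \ BB b σ σ0 j) ≠ 0 := by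
    by_contra hall
    push_neg at hall
    have hzero : ∀ m, m ≤ k → τ (BB b σ σ0 m) = 0 := by
      intro m
      induction m with
      | zero => intro _; exact hL
      | succ m ihm =>
        intro hmk
        have hm : m ≤ k := Nat.le_of_succ_le hmk
        refine le_antisymm ?_ (zero_le)
        have hcov : BB b σ σ0 (m+1) = BB b σ σ0 m ∪ (BB b σ σ0 (m+1) \ BB b σ σ0 m) :=
          (Set.union_diff_cancel (BB_mono b σ σ0 m)).symm
        calc τ (BB b σ σ0 (m+1)) ≤
            τ (BB b σ σ0 m) + τ (BB b σ σ0 (m+1) \ BB b σ σ0 m) := by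
              conv_lhs => rw [hcov]
              exact measure_union_le _ _
        _ = 0 := by rw [ihm hm, hall m hmk, add_zero]
    apply hτuniv_ne
    have hsum := measure_add_measure_compl (μ := τ) (measurable_BB b σ σ0 k)
    rw [hzero k le_rfl, hτBc, add_zero] at hsum
    exact hsum.symm
  obtain ⟨j, hjk, hτS⟩ := hex
  have hSmeas : MeasurableSet (BB b σ σ0 (j+1) \ BB b σ σ0 j) :=
    (measurable_BB b σ σ0 (j+1)).diff (measurable_BB b σ σ0 j)
  have hS_sub : BB b σ σ0 (j+1) \ BB b σ σ0 j ⊆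
      {y | 0 < (kap σ0 (Aset σ σ0 (BB b σ σ0 j))).rnDeriv (om b σ σ0) y} := by
    intro y hy
    rcases hy.1 with h | h
    · exact absurd h hy.2
    · exact h
  haveI : IsFiniteMeasure (kap σ0 (Aset σ σ0 (BB b σ σ0 j))) :=
    isFiniteMeasure_of_le (σ0.map Prod.snd) (kap_le σ0 _)
  haveI : IsFiniteMeasure (lam σ (BB b σ σ0 j)) :=
    isFiniteMeasure_of_le (σ.map Prod.fst) (lam_le σ _)
  set η := minTrick (om b σ σ0) τ (kap σ0 (Aset σ σ0 (BB b σ σ0 j)))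
      (BB b σ σ0 (j+1) \ BB b σ σ0 j) with hηdef
  have hητ : η ≤ τ := minTrick_le_left _ hSmeas hτ_ac
  have hηκ : η ≤ kap σ0 (Aset σ σ0 (BB b σ σ0 j)) :=
    minTrick_le_right _ _ (kap_ac b σ σ0 _)
  haveI : IsFiniteMeasure η := isFiniteMeasure_of_le τ hητ
  have hηne : η ≠ 0 := by
    have hTmeas : MeasurableSet ((BB b σ σ0 (j+1) \ BB b σ σ0 j) ∩
        {y | 0 < τ.rnDeriv (om b σ σ0) y}) :=
      hSmeas.inter (measurableSet_lt measurable_const (Measure.measurable_rnDeriv _ _))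
    have hτT : τ ((BB b σ σ0 (j+1) \ BB b σ σ0 j) ∩
        {y | 0 < τ.rnDeriv (om b σ σ0) y}) ≠ 0 := by
      intro h0
      apply hτS
      have hcov : BB b σ σ0 (j+1) \ BB b σ σ0 j ⊆
          ((BB b σ σ0 (j+1) \ BB b σ σ0 j) ∩ {y | 0 < τ.rnDeriv (om b σ σ0) y}) ∪
          {y | ¬ 0 < τ.rnDeriv (om b σ σ0) y} := by
        intro y hy
        by_cases hp : 0 < τ.rnDeriv (om b σ σ0) y
        · exact Or.inl ⟨hy, hp⟩
        · exact Or.inr hp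
      refine le_antisymm ?_ (zero_le)
      calc τ (BB b σ σ0 (j+1) \ BB b σ σ0 j) ≤
          τ ((BB b σ σ0 (j+1) \ BB b σ σ0 j) ∩ {y | 0 < τ.rnDeriv (om b σ σ0) y}) +
          τ {y | ¬ 0 < τ.rnDeriv (om b σ σ0) y} :=
            le_trans (measure_mono hcov) (measure_union_le _ _)
      _ = 0 := by rw [h0, null_of_rnDeriv_zero hτ_ac, add_zero]
    have homT : (om b σ σ0) ((BB b σ σ0 (j+1) \ BB b σ σ0 j) ∩
        {y | 0 < τ.rnDeriv (om b σ σ0) y}) ≠ 0 := fun h0 => hτT (hτ_ac h0)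
    exact minTrick_ne_zero hSmeas hTmeas (fun y hy => hy.1) (fun y hy => hy.2)
      (fun y hy => hS_sub hy.1) homT
  -- bounce piece through σ0
  set g0pc := (σ0.restrict ((Aset σ σ0 (BB b σ σ0 j)) ×ˢ Set.univ)).withDensity
      (fun p => min 1 (η.rnDeriv (kap σ0 (Aset σ σ0 (BB b σ σ0 j))) p.2)) with hg0pcdef
  have hg0pc_le_r : g0pc ≤ σ0.restrict ((Aset σ σ0 (BB b σ σ0 j)) ×ˢ Set.univ) :=
    withDensity_min_le _
  have hg0pc_le : g0pc ≤ σ0 := le_trans hg0pc_le_r Measure.restrict_le_self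
  haveI : IsFiniteMeasure g0pc := isFiniteMeasure_of_le σ0 hg0pc_le
  have hg0pc_snd : g0pc.map Prod.snd = η := by
    rw [hg0pcdef, map_withDensity_snd _
      (measurable_const.min (Measure.measurable_rnDeriv η _))]
    exact withDensity_min_eq hηκ
  set ρ'' := g0pc.map Prod.fst with hρ''def
  haveI : IsFiniteMeasure ρ'' := by rw [hρ''def]; exact Measure.isFiniteMeasure_map _ _
  have hρ''Ac : ρ'' (Aset σ σ0 (BB b σ σ0 j))ᶜ = 0 :=
    carried_fst (measurable_Aset σ σ0 _) hg0pc_le_r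
  have hρ''univ : ρ'' Set.univ = η Set.univ := by
    rw [hρ''def, map_univ_fst, ← map_univ_snd g0pc, hg0pc_snd]
  have hρ''_le_ξ0 : ρ'' ≤ σ0.map Prod.fst := by
    rw [hρ''def]
    exact Measure.map_mono hg0pc_le measurable_fst
  have hρ''_ac : ρ'' ≪ chi σ σ0 :=
    Measure.absolutelyContinuous_of_le (le_trans hρ''_le_ξ0 (Measure.le_add_left le_rfl))
  set θ := minTrick (chi σ σ0) ρ'' (lam σ (BB b σ σ0 j)) (Aset σ σ0 (BB b σ σ0 j))
    with hθdef
  have hθρ'' : θ ≤ ρ'' := minTrick_le_left _ (measurable_Aset σ σ0 _) hρ''_ac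
  have hθlamj : θ ≤ lam σ (BB b σ σ0 j) := minTrick_le_right _ _ (lam_ac σ σ0 _)
  haveI : IsFiniteMeasure θ := isFiniteMeasure_of_le _ hθρ''
  have hθne : θ ≠ 0 := by
    have hTmeas : MeasurableSet (Aset σ σ0 (BB b σ σ0 j) ∩
        {x | 0 < ρ''.rnDeriv (chi σ σ0) x}) :=
      (measurable_Aset σ σ0 _).inter
        (measurableSet_lt measurable_const (Measure.measurable_rnDeriv _ _))
    have hρ''T : ρ'' (Aset σ σ0 (BB b σ σ0 j) ∩
        {x | 0 < ρ''.rnDeriv (chi σ σ0) x}) ≠ 0 := by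
      intro h0
      have hcov : (Set.univ : Set X) ⊆
          ((Aset σ σ0 (BB b σ σ0 j) ∩ {x | 0 < ρ''.rnDeriv (chi σ σ0) x}) ∪
            {x | ¬ 0 < ρ''.rnDeriv (chi σ σ0) x}) ∪ (Aset σ σ0 (BB b σ σ0 j))ᶜ := by
        intro x _
        by_cases h1 : x ∈ Aset σ σ0 (BB b σ σ0 j)
        · by_cases h2 : 0 < ρ''.rnDeriv (chi σ σ0) x
          · exact Or.inl (Or.inl ⟨h1, h2⟩)
          · exact Or.inl (Or.inr h2)
        · exact Or.inr h1
      have huniv0 : ρ'' Set.univ = 0 := by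
        refine le_antisymm ?_ (zero_le)
        calc ρ'' Set.univ ≤
            ρ'' (((Aset σ σ0 (BB b σ σ0 j) ∩ {x | 0 < ρ''.rnDeriv (chi σ σ0) x}) ∪
              {x | ¬ 0 < ρ''.rnDeriv (chi σ σ0) x}) ∪ (Aset σ σ0 (BB b σ σ0 j))ᶜ) :=
              measure_mono hcov
        _ ≤ ρ'' ((Aset σ σ0 (BB b σ σ0 j) ∩ {x | 0 < ρ''.rnDeriv (chi σ σ0) x}) ∪
              {x | ¬ 0 < ρ''.rnDeriv (chi σ σ0) x}) + ρ'' (Aset σ σ0 (BB b σ σ0 j))ᶜ :=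
              measure_union_le _ _
        _ ≤ (ρ'' (Aset σ σ0 (BB b σ σ0 j) ∩ {x | 0 < ρ''.rnDeriv (chi σ σ0) x}) +
              ρ'' {x | ¬ 0 < ρ''.rnDeriv (chi σ σ0) x}) + ρ'' (Aset σ σ0 (BB b σ σ0 j))ᶜ :=
              add_le_add_left (measure_union_le _ _) _
        _ = 0 := by
              rw [h0, null_of_rnDeriv_zero hρ''_ac, hρ''Ac, add_zero, add_zero]
      rw [hρ''univ] at huniv0
      exact (Measure.measure_univ_pos.mpr hηne).ne' huniv0
    have hchiT : chi σ σ0 (Aset σ σ0 (BB b σ σ0 j) ∩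
        {x | 0 < ρ''.rnDeriv (chi σ σ0) x}) ≠ 0 := fun h0 => hρ''T (hρ''_ac h0)
    exact minTrick_ne_zero (measurable_Aset σ σ0 _) hTmeas (fun x hx => hx.1)
      (fun x hx => hx.2) (fun x hx => hx.1) hchiT
  obtain ⟨h, h0, hhσ, hh0σ0, hhfst1, hhfst2, hhsnd1, hhsnd2, hhval⟩ :=
    IH j hjk θ hθne hθlamj
  haveI : IsFiniteMeasure h := isFiniteMeasure_of_le σ hhσ
  haveI : IsFiniteMeasure h0 := isFiniteMeasure_of_le σ0 hh0σ0
  haveI : IsFiniteMeasure (h0.map Prod.fst) := Measure.isFiniteMeasure_map _ _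
  set s := h.map Prod.fst - h0.map Prod.fst with hsdef
  have hs_le_θ : s ≤ θ := by
    rw [Measure.le_iff]
    intro E hE
    rw [hsdef, Measure.sub_apply hE hhfst1]
    refine tsub_le_iff_right.mpr ?_
    calc (h.map Prod.fst) E ≤ (h0.map Prod.fst + θ) E := Measure.le_iff'.mp hhfst2 E
    _ = θ E + (h0.map Prod.fst) E := by rw [Measure.add_apply, add_comm]
  have hs_add : s + h0.map Prod.fst = h.map Prod.fst :=
    Measure.sub_add_cancel_of_le hhfst1
  have hs_le_ρ'' : s ≤ ρ'' := le_trans hs_le_θ hθρ''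
  set g0pc2 := g0pc.withDensity (fun p => min 1 (s.rnDeriv ρ'' p.1)) with hg0pc2def
  have hg0pc2_le : g0pc2 ≤ g0pc := withDensity_min_le _
  have hg0pc2_fst : g0pc2.map Prod.fst = s := by
    rw [hg0pc2def, map_withDensity_fst _
      (measurable_const.min (Measure.measurable_rnDeriv s ρ'')), ← hρ''def]
    exact withDensity_min_eq hs_le_ρ''
  set η' := g0pc2.map Prod.snd with hη'def
  have hη'_le_η : η' ≤ η := by
    rw [hη'def, ← hg0pc_snd]
    exact Measure.map_mono hg0pc2_le measurable_snd
  have hη'_le_τ : η' ≤ τ := le_trans hη'_le_η hητ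
  set gup := push.withDensity (fun p => min 1 (η'.rnDeriv τ p.2)) with hgupdef
  have hgup_le : gup ≤ push := withDensity_min_le _
  have hgup_snd : gup.map Prod.snd = η' := by
    rw [hgupdef, map_withDensity_snd _
      (measurable_const.min (Measure.measurable_rnDeriv η' τ)), ← hτdef]
    exact withDensity_min_eq hη'_le_τ
  have hgup_fst_le : gup.map Prod.fst ≤ ρ := by
    rw [← hpush_fst]
    exact Measure.map_mono hgup_le measurable_fst
  haveI : IsFiniteMeasure gup := isFiniteMeasure_of_le push hgup_le
  have hmass1 : gup Set.univ = g0pc2 Set.univ := by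
    rw [← map_univ_snd gup, hgup_snd, hη'def, map_univ_snd]
  refine ⟨(2:ℝ≥0∞)⁻¹ • (gup + h), (2:ℝ≥0∞)⁻¹ • (g0pc2 + h0),
    half_add_le (le_trans hgup_le hpush_le) hhσ,
    half_add_le (le_trans hg0pc2_le hg0pc_le) hh0σ0, ?_, ?_, ?_, ?_, ?_⟩
  · rw [Measure.map_smul, Measure.map_smul, Measure.map_add _ _ measurable_fst,
      Measure.map_add _ _ measurable_fst, hg0pc2_fst, hs_add]
    exact smul_mono _ (Measure.le_add_left le_rfl)
  · rw [Measure.map_smul, Measure.map_smul, Measure.map_add _ _ measurable_fst,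
      Measure.map_add _ _ measurable_fst, hg0pc2_fst, hs_add, smul_add,
      add_comm ((2:ℝ≥0∞)⁻¹ • gup.map Prod.fst) _]
    refine add_le_add_right ?_ _
    exact le_trans (smul_mono _ hgup_fst_le) (halfSmul_le_self ρ)
  · rw [Measure.map_smul, Measure.map_smul, Measure.map_add _ _ measurable_snd,
      Measure.map_add _ _ measurable_snd, hgup_snd, ← hη'def]
    exact smul_mono _ (add_le_add_right hhsnd1 _)
  · rw [Measure.map_smul, Measure.map_smul, Measure.map_add _ _ measurable_snd,
      Measure.map_add _ _ measurable_snd, hgup_snd, ← hη'def, smul_add, smul_add,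
      add_assoc]
    refine add_le_add_right ?_ _
    calc (2:ℝ≥0∞)⁻¹ • h.map Prod.snd ≤
        (2:ℝ≥0∞)⁻¹ • (h0.map Prod.snd + kcap b σ0) := smul_mono _ hhsnd2
    _ = (2:ℝ≥0∞)⁻¹ • h0.map Prod.snd + (2:ℝ≥0∞)⁻¹ • kcap b σ0 := smul_add _ _ _
    _ ≤ (2:ℝ≥0∞)⁻¹ • h0.map Prod.snd + kcap b σ0 :=
        add_le_add_right (halfSmul_le_self _) _
  · simp only [Measure.smul_apply, Measure.add_apply, smul_eq_mul]
    refine (ENNReal.mul_lt_mul_iff_right (by norm_num) (by norm_num)).mpr ?_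
    rw [← hmass1]
    exact ENNReal.add_lt_add_left (measure_ne_top gup _) hhval

end AugSubMain


end AuxForAugmentingSubplan

open AugSubAux AugSubAux2 AugSubMain ScratchHelpers in
theorem measure_theoretic_augmenting_subplan
    {X Y : Type} [MeasurableSpace X] [MeasurableSpace Y]
    (b : Measure Y) [IsFiniteMeasure b]
    (σ σ0 : Measure (X × Y)) [IsFiniteMeasure σ] [IsFiniteMeasure σ0]
    (hψ : σ.map Prod.snd ≤ b) (hψ0 : σ0.map Prod.snd ≤ b)
    (hmass : σ0 Set.univ < σ Set.univ) :
    ∃ γ γ0 : Measure (X × Y),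
      γ ≤ σ ∧ γ0 ≤ σ0 ∧
      -- (i)  α0 ≤ α and 0 ≠ α − α0 ≤ (ξ − ξ0)⁺
      γ0.map Prod.fst ≤ γ.map Prod.fst ∧
      γ.map Prod.fst - γ0.map Prod.fst ≠ 0 ∧
      γ.map Prod.fst - γ0.map Prod.fst ≤ σ.map Prod.fst - σ0.map Prod.fst ∧
      -- (ii) β0 ≤ β, β − β0 ≠ 0, and β − β0 is carried by L
      γ0.map Prod.snd ≤ γ.map Prod.snd ∧
      γ.map Prod.snd - γ0.map Prod.snd ≠ 0 ∧
      (γ.map Prod.snd - γ0.map Prod.snd)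
          {y : Y | 1 ≤ (σ0.map Prod.snd).rnDeriv b y} = 0 ∧
      -- (iii) ψ0 − β0 + β ≤ b
      σ0.map Prod.snd - γ0.map Prod.snd + γ.map Prod.snd ≤ b := by
  classical
  haveI : IsFiniteMeasure (σ.map Prod.fst) := Measure.isFiniteMeasure_map _ _
  haveI : IsFiniteMeasure (σ0.map Prod.fst) := Measure.isFiniteMeasure_map _ _
  haveI : IsFiniteMeasure (σ.map Prod.snd) := Measure.isFiniteMeasure_map _ _
  haveI : IsFiniteMeasure (σ0.map Prod.snd) := Measure.isFiniteMeasure_map _ _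
  haveI : IsFiniteMeasure (chi σ σ0) := by unfold chi; infer_instance
  haveI : IsFiniteMeasure (om b σ σ0) := by unfold om; infer_instance
  set μd := σ.map Prod.fst - σ0.map Prod.fst with hμddef
  haveI : IsFiniteMeasure μd := by rw [hμddef]; infer_instance
  have hμd_le_ξ : μd ≤ σ.map Prod.fst := by rw [hμddef]; exact Measure.sub_le
  have hμd_ac : μd ≪ chi σ σ0 :=
    Measure.absolutelyContinuous_of_le (le_trans hμd_le_ξ (Measure.le_add_right le_rfl))
  -- Step 1: some layer carries surplus mass
  have hex : ∃ k, μd (Aset σ σ0 (BB b σ σ0 k)) ≠ 0 := by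
    by_contra hall
    push_neg at hall
    set A := ⋃ n, Aset σ σ0 (BB b σ σ0 n) with hAdef
    set Bu := ⋃ n, BB b σ σ0 n with hBudef
    have hAmeas : MeasurableSet A := MeasurableSet.iUnion (fun n => measurable_Aset σ σ0 _)
    have hBumeas : MeasurableSet Bu :=
      MeasurableSet.iUnion (fun n => measurable_BB b σ σ0 n)
    have hμdA : μd A = 0 := by
      rw [hAdef]
      exact measure_iUnion_null hall
    have hξA : (σ.map Prod.fst) A ≤ (σ0.map Prod.fst) A := by
      have h := Measure.le_iff'.mp (le_sub_add (σ.map Prod.fst) (σ0.map Prod.fst)) A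
      rw [Measure.add_apply, ← hμddef, hμdA, zero_add] at h
      exact h
    have hσcut : σ (Aᶜ ×ˢ Bu) = 0 := by
      have hsub : Aᶜ ×ˢ Bu ⊆
          ⋃ n, ((Aset σ σ0 (BB b σ σ0 n))ᶜ ×ˢ BB b σ σ0 n) := by
        rintro ⟨x, y⟩ ⟨hx, hy⟩
        obtain ⟨n, hn⟩ := Set.mem_iUnion.mp hy
        refine Set.mem_iUnion.mpr ⟨n, ?_, hn⟩
        intro hxA
        exact hx (Set.mem_iUnion.mpr ⟨n, hxA⟩)
      refine measure_mono_null hsub (measure_iUnion_null (fun n => ?_))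
      haveI : IsFiniteMeasure (lam σ (BB b σ σ0 n)) :=
        isFiniteMeasure_of_le _ (lam_le σ _)
      have h1 : σ ((Aset σ σ0 (BB b σ σ0 n))ᶜ ×ˢ BB b σ σ0 n) =
          (lam σ (BB b σ σ0 n)) (Aset σ σ0 (BB b σ σ0 n))ᶜ := by
        exact (map_fst_restrict_apply σ (measurable_BB b σ σ0 n)
          (measurable_Aset σ σ0 _).compl).symm
      rw [h1]
      have h2 : (Aset σ σ0 (BB b σ σ0 n))ᶜ =
          {x | ¬ 0 < (lam σ (BB b σ σ0 n)).rnDeriv (chi σ σ0) x} := rfl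
      rw [h2]
      exact null_of_rnDeriv_zero (lam_ac σ σ0 _)
    have hσ0cut : σ0 (A ×ˢ Buᶜ) = 0 := by
      have hsub : A ×ˢ Buᶜ ⊆ ⋃ n, (Aset σ σ0 (BB b σ σ0 n) ×ˢ
          {y | ¬ 0 < (kap σ0 (Aset σ σ0 (BB b σ σ0 n))).rnDeriv (om b σ σ0) y}) := by
        rintro ⟨x, y⟩ ⟨hx, hy⟩
        obtain ⟨n, hn⟩ := Set.mem_iUnion.mp hx
        refine Set.mem_iUnion.mpr ⟨n, hn, ?_⟩
        intro hpos
        exact hy (Set.mem_iUnion.mpr ⟨n+1, Or.inr hpos⟩)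
      refine measure_mono_null hsub (measure_iUnion_null (fun n => ?_))
      haveI : IsFiniteMeasure (kap σ0 (Aset σ σ0 (BB b σ σ0 n))) :=
        isFiniteMeasure_of_le _ (kap_le σ0 _)
      have h1 : σ0 (Aset σ σ0 (BB b σ σ0 n) ×ˢ
          {y | ¬ 0 < (kap σ0 (Aset σ σ0 (BB b σ σ0 n))).rnDeriv (om b σ σ0) y}) =
          (kap σ0 (Aset σ σ0 (BB b σ σ0 n)))
          {y | ¬ 0 < (kap σ0 (Aset σ σ0 (BB b σ σ0 n))).rnDeriv (om b σ σ0) y} := by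
        exact (map_snd_restrict_apply σ0 (measurable_Aset σ σ0 _)
          (show MeasurableSet {y | ¬ 0 <
              (kap σ0 (Aset σ σ0 (BB b σ σ0 n))).rnDeriv (om b σ σ0) y} from
            (measurableSet_lt measurable_const (Measure.measurable_rnDeriv _ _)).compl)).symm
      rw [h1]
      exact null_of_rnDeriv_zero (kap_ac b σ σ0 _)
    have hψBc : (σ.map Prod.snd) Buᶜ ≤ (σ0.map Prod.snd) Buᶜ := by
      refine le_trans (Measure.le_iff'.mp hψ Buᶜ) ?_
      refine b_le_psi0_on_Lc b σ0 hψ0 hBumeas.compl ?_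
      intro y hy hyL
      exact hy (Set.mem_iUnion.mpr ⟨0, hyL⟩)
    have hcov : (Set.univ : Set (X × Y)) ⊆
        (A ×ˢ Set.univ) ∪ ((Aᶜ ×ˢ Bu) ∪ (Set.univ ×ˢ Buᶜ)) := by
      rintro ⟨x, y⟩ -
      by_cases hx : x ∈ A
      · exact Or.inl ⟨hx, Set.mem_univ _⟩
      · by_cases hy : y ∈ Bu
        · exact Or.inr (Or.inl ⟨hx, hy⟩)
        · exact Or.inr (Or.inr ⟨Set.mem_univ _, hy⟩)
    have e1 : σ (A ×ˢ Set.univ) = (σ.map Prod.fst) A := by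
      rw [Measure.map_apply measurable_fst hAmeas]
      congr 1
      ext p
      simp
    have e2 : σ0 (A ×ˢ Set.univ) = (σ0.map Prod.fst) A := by
      rw [Measure.map_apply measurable_fst hAmeas]
      congr 1
      ext p
      simp
    have e3 : σ (Set.univ ×ˢ Buᶜ) = (σ.map Prod.snd) Buᶜ := by
      rw [Measure.map_apply measurable_snd hBumeas.compl]
      congr 1
      ext p
      simp
    have e4 : σ0 (Set.univ ×ˢ Bu) = (σ0.map Prod.snd) Bu := by
      rw [Measure.map_apply measurable_snd hBumeas]
      congr 1
      ext p
      simp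
    have hsplit0 : σ0 (A ×ˢ Set.univ) = σ0 (A ×ˢ Bu) + σ0 (A ×ˢ Buᶜ) := by
      have h := measure_inter_add_diff (μ := σ0) (A ×ˢ Set.univ)
        (MeasurableSet.univ.prod hBumeas)
      have i1 : (A ×ˢ Set.univ) ∩ (Set.univ ×ˢ Bu) = A ×ˢ Bu := by
        ext p
        simp [Set.mem_prod]
      have i2 : (A ×ˢ Set.univ) \ (Set.univ ×ˢ Bu) = A ×ˢ Buᶜ := by
        ext p
        simp [Set.mem_prod]
      rw [i1, i2] at h
      exact h.symm
    have hfinal : σ Set.univ ≤ σ0 Set.univ := by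
      calc σ Set.univ ≤ σ ((A ×ˢ Set.univ) ∪ ((Aᶜ ×ˢ Bu) ∪ (Set.univ ×ˢ Buᶜ))) :=
            measure_mono hcov
      _ ≤ σ (A ×ˢ Set.univ) + (σ (Aᶜ ×ˢ Bu) + σ (Set.univ ×ˢ Buᶜ)) :=
            le_trans (measure_union_le _ _) (add_le_add_right (measure_union_le _ _) _)
      _ = σ (A ×ˢ Set.univ) + σ (Set.univ ×ˢ Buᶜ) := by rw [hσcut, zero_add]
      _ ≤ (σ0.map Prod.fst) A + (σ0.map Prod.snd) Buᶜ := by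
            rw [e1, e3]
            exact add_le_add hξA hψBc
      _ = σ0 (A ×ˢ Set.univ) + (σ0.map Prod.snd) Buᶜ := by rw [e2]
      _ = σ0 (A ×ˢ Bu) + (σ0.map Prod.snd) Buᶜ := by rw [hsplit0, hσ0cut, add_zero]
      _ ≤ σ0 (Set.univ ×ˢ Bu) + (σ0.map Prod.snd) Buᶜ :=
            add_le_add_left (measure_mono (Set.prod_mono (Set.subset_univ A)
              subset_rfl)) _
      _ = (σ0.map Prod.snd) Bu + (σ0.map Prod.snd) Buᶜ := by rw [e4]
      _ = (σ0.map Prod.snd) Set.univ := measure_add_measure_compl hBumeas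
      _ = σ0 Set.univ := map_univ_snd σ0
    exact absurd hmass (not_lt.mpr hfinal)
  obtain ⟨k, hk⟩ := hex
  haveI : IsFiniteMeasure (lam σ (BB b σ σ0 k)) := isFiniteMeasure_of_le _ (lam_le σ _)
  set ρ := minTrick (chi σ σ0) μd (lam σ (BB b σ σ0 k)) (Aset σ σ0 (BB b σ σ0 k))
    with hρdef
  have hρ_le_μd : ρ ≤ μd := minTrick_le_left _ (measurable_Aset σ σ0 _) hμd_ac
  have hρ_le_lam : ρ ≤ lam σ (BB b σ σ0 k) := minTrick_le_right _ _ (lam_ac σ σ0 _)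
  have hρne : ρ ≠ 0 := by
    have hTmeas : MeasurableSet (Aset σ σ0 (BB b σ σ0 k) ∩
        {x | 0 < μd.rnDeriv (chi σ σ0) x}) :=
      (measurable_Aset σ σ0 _).inter
        (measurableSet_lt measurable_const (Measure.measurable_rnDeriv _ _))
    have hμdT : μd (Aset σ σ0 (BB b σ σ0 k) ∩ {x | 0 < μd.rnDeriv (chi σ σ0) x}) ≠ 0 := by
      intro h0
      apply hk
      have hcov2 : Aset σ σ0 (BB b σ σ0 k) ⊆
          (Aset σ σ0 (BB b σ σ0 k) ∩ {x | 0 < μd.rnDeriv (chi σ σ0) x}) ∪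
          {x | ¬ 0 < μd.rnDeriv (chi σ σ0) x} := by
        intro x hx
        by_cases hp : 0 < μd.rnDeriv (chi σ σ0) x
        · exact Or.inl ⟨hx, hp⟩
        · exact Or.inr hp
      refine le_antisymm ?_ (zero_le)
      calc μd (Aset σ σ0 (BB b σ σ0 k)) ≤
          μd ((Aset σ σ0 (BB b σ σ0 k) ∩ {x | 0 < μd.rnDeriv (chi σ σ0) x}) ∪
            {x | ¬ 0 < μd.rnDeriv (chi σ σ0) x}) := measure_mono hcov2
      _ ≤ μd (Aset σ σ0 (BB b σ σ0 k) ∩ {x | 0 < μd.rnDeriv (chi σ σ0) x}) +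
          μd {x | ¬ 0 < μd.rnDeriv (chi σ σ0) x} := measure_union_le _ _
      _ = 0 := by rw [h0, null_of_rnDeriv_zero hμd_ac, add_zero]
    have hchiT : chi σ σ0 (Aset σ σ0 (BB b σ σ0 k) ∩
        {x | 0 < μd.rnDeriv (chi σ σ0) x}) ≠ 0 := fun h0 => hμdT (hμd_ac h0)
    exact minTrick_ne_zero (measurable_Aset σ σ0 _) hTmeas (fun x hx => hx.1)
      (fun x hx => hx.2) (fun x hx => hx.1) hchiT
  obtain ⟨g, g0, hgσ, hg0σ0, hfst1, hfst2, hsnd1, hsnd2, hval⟩ :=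
    auxR b σ σ0 hψ hψ0 k ρ hρne hρ_le_lam
  haveI : IsFiniteMeasure g := isFiniteMeasure_of_le σ hgσ
  haveI : IsFiniteMeasure g0 := isFiniteMeasure_of_le σ0 hg0σ0
  haveI : IsFiniteMeasure (g0.map Prod.fst) := Measure.isFiniteMeasure_map _ _
  haveI : IsFiniteMeasure (g0.map Prod.snd) := Measure.isFiniteMeasure_map _ _
  have hLmeas : MeasurableSet (Lset b σ0) := measurable_Lset b σ0
  refine ⟨g, g0, hgσ, hg0σ0, hfst1, ?_, ?_, hsnd1, ?_, ?_, ?_⟩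
  · intro heq
    have h0 : (g.map Prod.fst - g0.map Prod.fst) Set.univ = 0 := by rw [heq]; rfl
    rw [Measure.sub_apply MeasurableSet.univ hfst1, map_univ_fst, map_univ_fst] at h0
    exact absurd h0 (tsub_pos_iff_lt.mpr hval).ne'
  · rw [Measure.le_iff]
    intro E hE
    rw [Measure.sub_apply hE hfst1]
    refine tsub_le_iff_right.mpr ?_
    calc (g.map Prod.fst) E ≤ (g0.map Prod.fst + ρ) E := Measure.le_iff'.mp hfst2 E
    _ = ρ E + (g0.map Prod.fst) E := by rw [Measure.add_apply, add_comm]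
    _ ≤ μd E + (g0.map Prod.fst) E :=
        add_le_add_left (Measure.le_iff'.mp hρ_le_μd E) _
  · intro heq
    have h0 : (g.map Prod.snd - g0.map Prod.snd) Set.univ = 0 := by rw [heq]; rfl
    rw [Measure.sub_apply MeasurableSet.univ hsnd1, map_univ_snd, map_univ_snd] at h0
    exact absurd h0 (tsub_pos_iff_lt.mpr hval).ne'
  · have hTmeas : MeasurableSet {y : Y | 1 ≤ (σ0.map Prod.snd).rnDeriv b y} :=
      measurableSet_le measurable_const (Measure.measurable_rnDeriv _ _)
    rw [Measure.sub_apply hTmeas hsnd1]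
    refine tsub_eq_zero_iff_le.mpr ?_
    have hempty : {y : Y | 1 ≤ (σ0.map Prod.snd).rnDeriv b y} ∩ Lset b σ0 = ∅ :=
      Set.eq_empty_iff_forall_notMem.mpr (fun y hy =>
        absurd (show (σ0.map Prod.snd).rnDeriv b y < 1 from hy.2) (not_lt.mpr hy.1))
    have hkcap0 : kcap b σ0 {y : Y | 1 ≤ (σ0.map Prod.snd).rnDeriv b y} = 0 := by
      rw [kcap, Measure.restrict_apply hTmeas, hempty, measure_empty]
    calc (g.map Prod.snd) {y : Y | 1 ≤ (σ0.map Prod.snd).rnDeriv b y} ≤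
        (g0.map Prod.snd + kcap b σ0) {y : Y | 1 ≤ (σ0.map Prod.snd).rnDeriv b y} :=
          Measure.le_iff'.mp hsnd2 _
    _ = (g0.map Prod.snd) {y : Y | 1 ≤ (σ0.map Prod.snd).rnDeriv b y} := by
          rw [Measure.add_apply, hkcap0, add_zero]
  · rw [Measure.le_iff]
    intro E hE
    have hβ0ψ0 : g0.map Prod.snd ≤ σ0.map Prod.snd :=
      Measure.map_mono hg0σ0 measurable_snd
    rw [Measure.add_apply, Measure.sub_apply hE hβ0ψ0]
    have hβE : (g.map Prod.snd) E ≤ (g0.map Prod.snd) E + kcap b σ0 E := by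
      have h := Measure.le_iff'.mp hsnd2 E
      rwa [Measure.add_apply] at h
    have hkcapE : kcap b σ0 E =
        b (E ∩ Lset b σ0) - (σ0.map Prod.snd) (E ∩ Lset b σ0) := by
      rw [kcap, Measure.restrict_apply hE, Measure.sub_apply (hE.inter hLmeas) hψ0]
    calc (σ0.map Prod.snd) E - (g0.map Prod.snd) E + (g.map Prod.snd) E
        ≤ (σ0.map Prod.snd) E - (g0.map Prod.snd) E +
            ((g0.map Prod.snd) E + kcap b σ0 E) := add_le_add_right hβE _
    _ = ((σ0.map Prod.snd) E - (g0.map Prod.snd) E + (g0.map Prod.snd) E) +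
          kcap b σ0 E := by ring
    _ = (σ0.map Prod.snd) E + kcap b σ0 E := by
          rw [tsub_add_cancel_of_le (Measure.le_iff'.mp hβ0ψ0 E)]
    _ = ((σ0.map Prod.snd) (E ∩ Lset b σ0) + (σ0.map Prod.snd) (E \ Lset b σ0)) +
          (b (E ∩ Lset b σ0) - (σ0.map Prod.snd) (E ∩ Lset b σ0)) := by
          rw [measure_inter_add_diff E hLmeas, hkcapE]
    _ = ((σ0.map Prod.snd) (E ∩ Lset b σ0) +
          (b (E ∩ Lset b σ0) - (σ0.map Prod.snd) (E ∩ Lset b σ0))) +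
          (σ0.map Prod.snd) (E \ Lset b σ0) := by ring
    _ = b (E ∩ Lset b σ0) + (σ0.map Prod.snd) (E \ Lset b σ0) := by
          rw [add_tsub_cancel_of_le (Measure.le_iff'.mp hψ0 (E ∩ Lset b σ0))]
    _ ≤ b (E ∩ Lset b σ0) + b (E \ Lset b σ0) :=
          add_le_add_right (Measure.le_iff'.mp hψ0 (E \ Lset b σ0)) _
    _ = b E := measure_inter_add_diff E hLmeas
end
end
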